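/- arXiv:2311.03182 — 7 statements merged into one kernel-verified Lean document; each statement's English description precedes it below -/
import Mathlib

section
/- Under Lim's system hypotheses (see context), the following strict lower bound holds: tanh(h·Λ/2) < Σ_{k ∈ ZMod(2n)} 1/(1 + exp(h·ℓ'_k)). (Since ℓ' is constant on the pairs {k, ω(k)}, this sum equals twice the sum of 1/(1+exp(h·ℓ_i)) over the n pairs, so this is the lower bound in the Basmajian-type inequality for metric graphs, Theorem 2 of the paper.) -/
/-- Lower bound in the Basmajian-type inequality for metric graphs
(Theorem 2, lower bound), stated via Lim's system of equations. -/
theorem tanh_lt_sum_of_lim_system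
    (n : ℕ) [NeZero n] (hn : 1 ≤ n) (h : ℝ) (hh : 0 < h)
    (L ℓ' X Xb Y : ZMod (2 * n) → ℝ)
    (ω : ZMod (2 * n) → ZMod (2 * n))
    (hL : ∀ k, 0 < L k)
    (hω : ∀ k, ω (ω k) = k) (hω' : ∀ k, ω k ≠ k)
    (hℓpos : ∀ k, 0 < ℓ' k) (hℓω : ∀ k, ℓ' (ω k) = ℓ' k)
    (hX : ∀ k, 0 < X k) (hXb : ∀ k, 0 < Xb k) (hY : ∀ k, 0 < Y k)
    (eqY : ∀ k, Y k = Real.exp (-h * L (ω k + 1)) * X (ω k + 1)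
        + Real.exp (-h * L (ω k)) * Xb (ω k))
    (eqX : ∀ k, X k = Real.exp (-h * L (k + 1)) * X (k + 1)
        + Real.exp (-h * ℓ' k) * Y k)
    (eqXb : ∀ k, Xb k = Real.exp (-h * L (k - 1)) * Xb (k - 1)
        + Real.exp (-h * ℓ' (k - 1)) * Y (k - 1)) :
    Real.tanh (h * (∑ k, L k) / 2) < ∑ k, 1 / (1 + Real.exp (h * ℓ' k)) := by
  have hm2 : 2 ≤ 2 * n := by omega
  set Λ : ℝ := ∑ k, L k with hΛdef
  have hΛpos : 0 < Λ := Finset.sum_pos (fun i _ => hL i) Finset.univ_nonempty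
  set q : ℝ := Real.exp (-(h * Λ)) with hqdef
  have hq0 : 0 < q := Real.exp_pos _
  have hq1 : q < 1 := Real.exp_lt_one_iff.2 (by nlinarith)
  set c : ZMod (2 * n) → ℝ := fun t => Real.exp (-h * ℓ' t) with hcdef
  have hc0 : ∀ t, 0 < c t := fun t => Real.exp_pos _
  have hcω : ∀ t, c (ω t) = c t := fun t => by simp only [hcdef]; rw [hℓω t]
  set g : ZMod (2 * n) → ℝ := fun t => c t * Y t with hgdef
  have hg0 : ∀ t, 0 < g t := fun t => mul_pos (hc0 t) (hY t)
  set T : ℝ := ∑ t, g t with hTdef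
  have hT0 : 0 < T := Finset.sum_pos (fun i _ => hg0 i) Finset.univ_nonempty
  -- generic reindexing lemmas
  have sumrange : ∀ f : ZMod (2 * n) → ℝ,
      ∑ j ∈ Finset.range (2 * n), f (j : ZMod (2 * n)) = ∑ t, f t := by
    intro f
    apply Finset.sum_nbij' (i := fun (j : ℕ) => (j : ZMod (2 * n))) (j := fun t => t.val)
    · intro a _; exact Finset.mem_univ _
    · intro a _; exact Finset.mem_range.2 (ZMod.val_lt a)
    · intro a ha; exact ZMod.val_cast_of_lt (Finset.mem_range.1 ha)
    · intro a _; exact ZMod.natCast_rightInverse a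
    · intro a _; rfl
  have sumshift : ∀ (f : ZMod (2 * n) → ℝ) (a : ZMod (2 * n)), ∑ t, f (a + t) = ∑ t, f t :=
    fun f a => Fintype.sum_bijective (fun t => a + t) (Equiv.addLeft a).bijective _ _ (fun _ => rfl)
  have sumsub : ∀ (f : ZMod (2 * n) → ℝ) (a : ZMod (2 * n)), ∑ t, f (a - t) = ∑ t, f t :=
    fun f a => Fintype.sum_bijective (fun t => a - t)
      (Function.Involutive.bijective (fun x => by ring)) _ _ (fun _ => rfl)
  have range_sum_L : ∀ a : ZMod (2 * n), ∑ i ∈ Finset.range (2 * n), L (a + i) = Λ := by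
    intro a
    rw [show (∑ i ∈ Finset.range (2 * n), L (a + i)) = ∑ t, L (a + t) from
      sumrange (fun t => L (a + t)), sumshift L a]
  have range_sub_L : ∀ a : ZMod (2 * n), ∑ i ∈ Finset.range (2 * n), L (a - i) = Λ := by
    intro a
    rw [show (∑ i ∈ Finset.range (2 * n), L (a - i)) = ∑ t, L (a - t) from
      sumrange (fun t => L (a - t)), sumsub L a]
  -- splitting the total length along the cycle starting at k
  have hsplit : ∀ (k : ZMod (2 * n)) (j : ℕ), j ≤ 2 * n →
      (∑ i ∈ Finset.range j, L (k + 1 + i))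
        + (∑ i ∈ Finset.range (2 * n - j), L (k - i)) = Λ := by
    intro k j hj
    have h2 : ∑ i ∈ Finset.range (2 * n - j), L (k - i)
        = ∑ i ∈ Finset.Ico j (2 * n), L (k + 1 + i) := by
      apply Finset.sum_nbij' (i := fun i => 2 * n - 1 - i) (j := fun i => 2 * n - 1 - i)
      · intro a ha; rw [Finset.mem_range] at ha; rw [Finset.mem_Ico]; omega
      · intro a ha; rw [Finset.mem_Ico] at ha; rw [Finset.mem_range]; omega
      · intro a ha; rw [Finset.mem_range] at ha; omega
      · intro a ha; rw [Finset.mem_Ico] at ha; omega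
      · intro a ha; rw [Finset.mem_range] at ha
        congr 1
        have e1 : (2 * n - 1 - a : ℕ) = 2 * n - (1 + a) := by omega
        have e2 : ((2 * n - (1 + a) : ℕ) : ZMod (2 * n)) = -(1 + (a : ZMod (2 * n))) := by
          rw [Nat.cast_sub (by omega : 1 + a ≤ 2 * n), ZMod.natCast_self]
          push_cast
          ring
        rw [e1, e2]
        ring
    rw [h2, Finset.sum_range_add_sum_Ico _ hj]
    exact range_sum_L (k + 1)
  -- the key inequality for each k
  have key : ∀ k : ZMod (2 * n), (1 - q) * (Y (ω k) + c k * Y k) < (1 + q) * T := by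
    intro k
    set P : ℕ → ℝ := fun j => Real.exp (-(h * ∑ i ∈ Finset.range j, L (k + 1 + i))) with hP
    set Q : ℕ → ℝ := fun j => Real.exp (-(h * ∑ i ∈ Finset.range j, L (k - i))) with hQ
    have hP0 : ∀ j, 0 < P j := fun j => Real.exp_pos _
    have hQ0 : ∀ j, 0 < Q j := fun j => Real.exp_pos _
    -- forward telescoping
    have teleX : X k - q * X k
        = ∑ j ∈ Finset.range (2 * n), P j * g (k + (j : ZMod (2 * n))) := by
      have e1 : ∀ j : ℕ,
          P j * X (k + (j : ZMod (2 * n))) - P (j + 1) * X (k + ((j + 1 : ℕ) : ZMod (2 * n)))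
            = P j * g (k + (j : ZMod (2 * n))) := by
        intro j
        have hcast : (k + ((j + 1 : ℕ) : ZMod (2 * n))) = k + (j : ZMod (2 * n)) + 1 := by
          push_cast; ring
        have hcast2 : (k + 1 + ((j : ℕ) : ZMod (2 * n))) = k + (j : ZMod (2 * n)) + 1 := by
          ring
        have hPsucc : P (j + 1) = P j * Real.exp (-h * L (k + (j : ZMod (2 * n)) + 1)) := by
          simp only [hP]
          rw [Finset.sum_range_succ, ← Real.exp_add, hcast2]
          congr 1
          ring
        rw [hcast, hPsucc, eqX (k + (j : ZMod (2 * n)))]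
        simp only [hgdef, hcdef]
        ring
      have tel := Finset.sum_range_sub'
        (fun j => P j * X (k + (j : ZMod (2 * n)))) (2 * n)
      have hA0 : P 0 * X (k + ((0 : ℕ) : ZMod (2 * n))) = X k := by
        simp [hP]
      have hAm : P (2 * n) * X (k + ((2 * n : ℕ) : ZMod (2 * n))) = q * X k := by
        have : ((2 * n : ℕ) : ZMod (2 * n)) = 0 := ZMod.natCast_self _
        rw [this, add_zero]
        simp only [hP]
        rw [range_sum_L (k + 1)]
      calc X k - q * X k
          = P 0 * X (k + ((0 : ℕ) : ZMod (2 * n)))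
            - P (2 * n) * X (k + ((2 * n : ℕ) : ZMod (2 * n))) := by rw [hA0, hAm]
        _ = ∑ j ∈ Finset.range (2 * n),
              (P j * X (k + (j : ZMod (2 * n)))
                - P (j + 1) * X (k + ((j + 1 : ℕ) : ZMod (2 * n)))) := by
            rw [tel]
        _ = ∑ j ∈ Finset.range (2 * n), P j * g (k + (j : ZMod (2 * n))) :=
            Finset.sum_congr rfl (fun j _ => e1 j)
    -- backward telescoping
    have teleXb : Xb (k + 1) - q * Xb (k + 1)
        = ∑ j ∈ Finset.range (2 * n), Q j * g (k - (j : ZMod (2 * n))) := by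
      have e1 : ∀ j : ℕ,
          Q j * Xb (k + 1 - (j : ZMod (2 * n)))
            - Q (j + 1) * Xb (k + 1 - ((j + 1 : ℕ) : ZMod (2 * n)))
            = Q j * g (k - (j : ZMod (2 * n))) := by
        intro j
        have hcast : (k + 1 - ((j + 1 : ℕ) : ZMod (2 * n))) = k - (j : ZMod (2 * n)) := by
          push_cast; ring
        have hcast2 : (k + 1 - (j : ZMod (2 * n)) - 1) = k - (j : ZMod (2 * n)) := by
          ring
        have hQsucc : Q (j + 1) = Q j * Real.exp (-h * L (k - (j : ZMod (2 * n)))) := by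
          simp only [hQ]
          rw [Finset.sum_range_succ, ← Real.exp_add]
          congr 1
          ring
        rw [hcast, hQsucc, eqXb (k + 1 - (j : ZMod (2 * n))), hcast2]
        simp only [hgdef, hcdef]
        ring
      have tel := Finset.sum_range_sub'
        (fun j => Q j * Xb (k + 1 - (j : ZMod (2 * n)))) (2 * n)
      have hB0 : Q 0 * Xb (k + 1 - ((0 : ℕ) : ZMod (2 * n))) = Xb (k + 1) := by
        simp [hQ]
      have hBm : Q (2 * n) * Xb (k + 1 - ((2 * n : ℕ) : ZMod (2 * n))) = q * Xb (k + 1) := by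
        have : ((2 * n : ℕ) : ZMod (2 * n)) = 0 := ZMod.natCast_self _
        rw [this, sub_zero]
        simp only [hQ]
        rw [range_sub_L k]
      calc Xb (k + 1) - q * Xb (k + 1)
          = Q 0 * Xb (k + 1 - ((0 : ℕ) : ZMod (2 * n)))
            - Q (2 * n) * Xb (k + 1 - ((2 * n : ℕ) : ZMod (2 * n))) := by rw [hB0, hBm]
        _ = ∑ j ∈ Finset.range (2 * n),
              (Q j * Xb (k + 1 - (j : ZMod (2 * n)))
                - Q (j + 1) * Xb (k + 1 - ((j + 1 : ℕ) : ZMod (2 * n)))) := by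
            rw [tel]
        _ = ∑ j ∈ Finset.range (2 * n), Q j * g (k - (j : ZMod (2 * n))) :=
            Finset.sum_congr rfl (fun j _ => e1 j)
    -- split off the j = 0 term
    have hsplit0 : ∀ W : ℕ → ℝ, ∑ j ∈ Finset.range (2 * n), W j
        = W 0 + ∑ j ∈ Finset.Ico 1 (2 * n), W j := by
      intro W
      rw [Finset.range_eq_Ico, Finset.sum_eq_sum_Ico_succ_bot (by omega) W]
    -- reindex the backward sum
    have hGre : ∑ j ∈ Finset.Ico 1 (2 * n), Q j * g (k - (j : ZMod (2 * n)))
        = ∑ j ∈ Finset.Ico 1 (2 * n), Q (2 * n - j) * g (k + (j : ZMod (2 * n))) := by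
      apply Finset.sum_nbij' (i := fun j => 2 * n - j) (j := fun j => 2 * n - j)
      · intro a ha; rw [Finset.mem_Ico] at *; omega
      · intro a ha; rw [Finset.mem_Ico] at *; omega
      · intro a ha; rw [Finset.mem_Ico] at ha; omega
      · intro a ha; rw [Finset.mem_Ico] at ha; omega
      · intro a ha; rw [Finset.mem_Ico] at ha
        have e2 : (2 * n - (2 * n - a) : ℕ) = a := by omega
        have e3 : k + ((2 * n - a : ℕ) : ZMod (2 * n)) = k - (a : ZMod (2 * n)) := by
          rw [Nat.cast_sub (by omega : a ≤ 2 * n), ZMod.natCast_self]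
          ring
        rw [e2, e3]
    -- the strict pointwise bound
    have hbound : ∀ j ∈ Finset.Ico 1 (2 * n),
        (P j + Q (2 * n - j)) * g (k + (j : ZMod (2 * n)))
          < (1 + q) * g (k + (j : ZMod (2 * n))) := by
      intro j hj
      rw [Finset.mem_Ico] at hj
      have hP1 : P j < 1 := by
        simp only [hP]
        apply Real.exp_lt_one_iff.2
        have : 0 < ∑ i ∈ Finset.range j, L (k + 1 + i) :=
          Finset.sum_pos (fun i _ => hL _) (Finset.nonempty_range_iff.2 (by omega))
        nlinarith
      have hQ1 : Q (2 * n - j) < 1 := by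
        simp only [hQ]
        apply Real.exp_lt_one_iff.2
        have : 0 < ∑ i ∈ Finset.range (2 * n - j), L (k - i) :=
          Finset.sum_pos (fun i _ => hL _) (Finset.nonempty_range_iff.2 (by omega))
        nlinarith
      have hPQ : P j * Q (2 * n - j) = q := by
        simp only [hP, hQ]
        rw [← Real.exp_add, hqdef]
        congr 1
        have := hsplit k j (le_of_lt hj.2)
        nlinarith [this]
      have : P j + Q (2 * n - j) < 1 + q := by nlinarith [hP0 j, hQ0 (2 * n - j)]
      exact mul_lt_mul_of_pos_right this (hg0 _)
    -- sums of g over shifted range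
    have hTk : ∑ j ∈ Finset.range (2 * n), g (k + (j : ZMod (2 * n))) = T := by
      rw [show (∑ j ∈ Finset.range (2 * n), g (k + (j : ZMod (2 * n)))) = ∑ t, g (k + t) from
        sumrange (fun t => g (k + t)), sumshift g k, hTdef]
    have hIcoT : ∑ j ∈ Finset.Ico 1 (2 * n), g (k + (j : ZMod (2 * n))) = T - g k := by
      have h0 := hsplit0 (fun j => g (k + (j : ZMod (2 * n))))
      rw [hTk] at h0
      have : g (k + ((0 : ℕ) : ZMod (2 * n))) = g k := by norm_num
      rw [this] at h0
      linarith
    -- assemble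
    set Ssum : ℝ := ∑ j ∈ Finset.Ico 1 (2 * n),
      (P j + Q (2 * n - j)) * g (k + (j : ZMod (2 * n))) with hSsum
    have hbig : X k + Xb (k + 1) - q * (X k + Xb (k + 1)) = 2 * g k + Ssum := by
      have hF := hsplit0 (fun j => P j * g (k + (j : ZMod (2 * n))))
      have hG := hsplit0 (fun j => Q j * g (k - (j : ZMod (2 * n))))
      have hF0 : P 0 * g (k + ((0 : ℕ) : ZMod (2 * n))) = g k := by
        simp [hP]
      have hG0 : Q 0 * g (k - ((0 : ℕ) : ZMod (2 * n))) = g k := by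
        simp [hQ]
      have hmerge : (∑ j ∈ Finset.Ico 1 (2 * n), P j * g (k + (j : ZMod (2 * n))))
          + (∑ j ∈ Finset.Ico 1 (2 * n), Q (2 * n - j) * g (k + (j : ZMod (2 * n)))) = Ssum := by
        rw [hSsum, ← Finset.sum_add_distrib]
        exact Finset.sum_congr rfl (fun j _ => by ring)
      calc X k + Xb (k + 1) - q * (X k + Xb (k + 1))
          = (X k - q * X k) + (Xb (k + 1) - q * Xb (k + 1)) := by ring
        _ = (∑ j ∈ Finset.range (2 * n), P j * g (k + (j : ZMod (2 * n))))
            + (∑ j ∈ Finset.range (2 * n), Q j * g (k - (j : ZMod (2 * n)))) := by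
            rw [teleX, teleXb]
        _ = (P 0 * g (k + ((0 : ℕ) : ZMod (2 * n)))
              + ∑ j ∈ Finset.Ico 1 (2 * n), P j * g (k + (j : ZMod (2 * n))))
            + (Q 0 * g (k - ((0 : ℕ) : ZMod (2 * n)))
              + ∑ j ∈ Finset.Ico 1 (2 * n), Q j * g (k - (j : ZMod (2 * n)))) := by
            rw [← hF, ← hG]
        _ = 2 * g k + ((∑ j ∈ Finset.Ico 1 (2 * n), P j * g (k + (j : ZMod (2 * n))))
            + (∑ j ∈ Finset.Ico 1 (2 * n), Q (2 * n - j) * g (k + (j : ZMod (2 * n))))) := by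
            rw [hF0, hG0, hGre]; ring
        _ = 2 * g k + Ssum := by rw [hmerge]
    have hlt2 : Ssum < (1 + q) * T - g k - q * g k := by
      have hs := Finset.sum_lt_sum_of_nonempty
        (Finset.nonempty_Ico.2 (by omega)) hbound
      rw [← hSsum] at hs
      have hr : ∑ j ∈ Finset.Ico 1 (2 * n), (1 + q) * g (k + (j : ZMod (2 * n)))
          = (1 + q) * T - g k - q * g k := by
        rw [← Finset.mul_sum, hIcoT]; ring
      linarith [hs, hr.symm ▸ hs]
    -- the star identity
    have hstar : X k + Xb (k + 1) = Y (ω k) + 2 * (c k * Y k) := by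
      have h1 := eqX k
      have h2 := eqXb (k + 1)
      have h3 := eqY (ω k)
      rw [hω k] at h3
      have e1 : k + 1 - 1 = k := by ring
      rw [e1] at h2
      rw [h1, h2, h3]
      simp only [hcdef]
      ring
    have hend : (1 - q) * (Y (ω k) + c k * Y k) = g k + q * g k + Ssum := by
      have hgk : c k * Y k = g k := rfl
      calc (1 - q) * (Y (ω k) + c k * Y k)
          = (1 - q) * (Y (ω k) + 2 * (c k * Y k)) - (1 - q) * (c k * Y k) := by ring
        _ = (1 - q) * (X k + Xb (k + 1)) - (1 - q) * (c k * Y k) := by rw [hstar]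
        _ = (X k + Xb (k + 1) - q * (X k + Xb (k + 1))) - (1 - q) * (c k * Y k) := by ring
        _ = (2 * g k + Ssum) - (1 - q) * (c k * Y k) := by rw [hbig]
        _ = (2 * g k + Ssum) - (1 - q) * g k := by rw [hgk]
        _ = g k + q * g k + Ssum := by ring
    rw [hend]
    linarith [hlt2]
  -- symmetrize over the pair {k, ω k}
  have key2 : ∀ t, (1 - q) * ((1 + c t) * (Y t + Y (ω t))) < 2 * ((1 + q) * T) := by
    intro t
    have h1 := key t
    have h2 := key (ω t)
    rw [hω t, hcω t] at h2
    calc (1 - q) * ((1 + c t) * (Y t + Y (ω t)))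
        = (1 - q) * (Y (ω t) + c t * Y t) + (1 - q) * (Y t + c t * Y (ω t)) := by ring
      _ < (1 + q) * T + (1 + q) * T := add_lt_add h1 h2
      _ = 2 * ((1 + q) * T) := by ring
  -- sum of c t * Y (ω t)
  have hTω : ∑ t, c t * Y (ω t) = T := by
    rw [hTdef]
    exact Fintype.sum_bijective ω (Function.Involutive.bijective hω) _ _
      (fun t => by simp only [hgdef]; rw [hcω t])
  have hTc : ∑ t, c t * Y t = T := by
    rw [hTdef]
  have hfrac : ∀ t, 0 < c t / (1 + c t) := by
    intro t
    apply div_pos (hc0 t)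
    linarith [hc0 t]
  -- the main summed inequality
  have main : (1 - q) * (2 * T)
      < (2 * ((1 + q) * T)) * (∑ t, c t / (1 + c t)) := by
    have expand : ∑ t, (c t / (1 + c t)) * ((1 - q) * ((1 + c t) * (Y t + Y (ω t))))
        = (1 - q) * (2 * T) := by
      have e1 : ∀ t : ZMod (2 * n), (c t / (1 + c t)) * ((1 - q) * ((1 + c t) * (Y t + Y (ω t))))
          = (1 - q) * (c t * Y t) + (1 - q) * (c t * Y (ω t)) := by
        intro t
        have hne : (1 + c t) ≠ 0 := by linarith [hc0 t]
        field_simp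
      rw [Finset.sum_congr rfl (fun t _ => e1 t), Finset.sum_add_distrib,
        ← Finset.mul_sum, ← Finset.mul_sum, hTc, hTω]
      ring
    have hlt : ∑ t, (c t / (1 + c t)) * ((1 - q) * ((1 + c t) * (Y t + Y (ω t))))
        < ∑ t, (c t / (1 + c t)) * (2 * ((1 + q) * T)) :=
      Finset.sum_lt_sum_of_nonempty Finset.univ_nonempty
        (fun t _ => mul_lt_mul_of_pos_left (key2 t) (hfrac t))
    rw [expand] at hlt
    calc (1 - q) * (2 * T) < ∑ t, (c t / (1 + c t)) * (2 * ((1 + q) * T)) := hlt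
      _ = (2 * ((1 + q) * T)) * (∑ t, c t / (1 + c t)) := by
          rw [← Finset.sum_mul]
          ring
  have hfinal : (1 - q) / (1 + q) < ∑ t, c t / (1 + c t) := by
    rw [div_lt_iff₀ (by linarith : (0:ℝ) < 1 + q)]
    nlinarith [main, hT0]
  -- rewrite the goal
  have htanh : Real.tanh (h * Λ / 2) = (1 - q) / (1 + q) := by
    rw [Real.tanh_eq_sinh_div_cosh, Real.sinh_eq, Real.cosh_eq, hqdef]
    rw [show -(h * Λ) = -(h * Λ / 2) + -(h * Λ / 2) by ring, Real.exp_add, Real.exp_neg]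
    have hu0 : 0 < Real.exp (h * Λ / 2) := Real.exp_pos _
    have h1 : Real.exp (h * Λ / 2) + (Real.exp (h * Λ / 2))⁻¹ ≠ 0 := by positivity
    have h2 : 1 + (Real.exp (h * Λ / 2))⁻¹ * (Real.exp (h * Λ / 2))⁻¹ ≠ 0 := by positivity
    field_simp
  have hterm : ∀ t : ZMod (2 * n), 1 / (1 + Real.exp (h * ℓ' t)) = c t / (1 + c t) := by
    intro t
    simp only [hcdef]
    rw [show (-h * ℓ' t) = -(h * ℓ' t) by ring, Real.exp_neg]
    have he : 0 < Real.exp (h * ℓ' t) := Real.exp_pos _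
    have h1 : 1 + Real.exp (h * ℓ' t) ≠ 0 := by positivity
    have h2 : 1 + (Real.exp (h * ℓ' t))⁻¹ ≠ 0 := by positivity
    field_simp
    ring
  rw [show (∑ k, 1 / (1 + Real.exp (h * ℓ' k))) = ∑ t, c t / (1 + c t) from
    Finset.sum_congr rfl (fun t _ => hterm t), htanh]
  exact hfinal
end

section
/- Under Lim's system hypotheses (see context), the following strict upper bound holds: Σ_{k ∈ ZMod(2n)} 1/(1 + exp(h·ℓ'_k)) < sinh(h·Λ/2). (Since ℓ' is constant on the pairs {k, ω(k)}, this sum equals twice the sum of 1/(1+exp(h·ℓ_i)) over the n pairs, so this is the upper bound in the Basmajian-type inequality for metric graphs, Theorem 2 of the paper.) -/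
private lemma sum_zmod_range (N : ℕ) [NeZero N] (f : ZMod N → ℝ) :
    ∑ i ∈ Finset.range N, f (i : ZMod N) = ∑ m : ZMod N, f m := by
  refine Finset.sum_nbij' (fun i => (i : ZMod N)) (fun m => m.val) ?_ ?_ ?_ ?_ ?_
  · intro i hi; exact Finset.mem_univ _
  · intro m _; exact Finset.mem_range.2 (ZMod.val_lt m)
  · intro i hi; exact ZMod.val_natCast_of_lt (Finset.mem_range.1 hi)
  · intro m _; simp [ZMod.natCast_val, ZMod.cast_id]
  · intro i _; rfl

private lemma sum_zmod_add (N : ℕ) [NeZero N] (c : ZMod N) (f : ZMod N → ℝ) :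
    ∑ i ∈ Finset.range N, f (c + (i : ZMod N)) = ∑ m : ZMod N, f m := by
  rw [sum_zmod_range N (fun m => f (c + m))]
  exact Fintype.sum_equiv (Equiv.addLeft c) _ f (fun m => rfl)

private lemma sum_zmod_sub (N : ℕ) [NeZero N] (c : ZMod N) (f : ZMod N → ℝ) :
    ∑ i ∈ Finset.range N, f (c - (i : ZMod N)) = ∑ m : ZMod N, f m := by
  rw [sum_zmod_range N (fun m => f (c - m))]
  exact Fintype.sum_equiv (Equiv.subLeft c) _ f (fun m => rfl)

private lemma unroll_nat (h : ℝ) (x y l e : ℕ → ℝ)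
    (hx : ∀ i, x i = Real.exp (-h * l i) * x (i + 1) + Real.exp (-h * e i) * y i) :
    ∀ j, x 0 = Real.exp (-h * ∑ i ∈ Finset.range j, l i) * x j
      + ∑ i ∈ Finset.range j,
          Real.exp (-h * ∑ i' ∈ Finset.range i, l i')
            * (Real.exp (-h * e i) * y i) := by
  intro j
  induction j with
  | zero => simp
  | succ j ih =>
    rw [Finset.sum_range_succ, Finset.sum_range_succ, ih, hx j,
      show -h * ((∑ i ∈ Finset.range j, l i) + l j)
          = -h * (∑ i ∈ Finset.range j, l i) + -h * l j by ring,
      Real.exp_add]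
    ring

private lemma amgm (x y s : ℝ) (hx : 0 < x) (hs : 0 < s) (hxy : x * y = s ^ 2) :
    2 * s ≤ x + y := by
  nlinarith [sq_nonneg (x - s), hx, hs]

private lemma key_ineq (N : ℕ) [NeZero N] (hN2 : 2 ≤ N) (h : ℝ) (hh : 0 < h)
    (L ℓ' X Xb Y : ZMod N → ℝ)
    (ω : ZMod N → ZMod N)
    (hL : ∀ k, 0 < L k)
    (hℓpos : ∀ k, 0 < ℓ' k)
    (hX : ∀ k, 0 < X k) (hXb : ∀ k, 0 < Xb k) (hY : ∀ k, 0 < Y k)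
    (eqY : ∀ k, Y k = Real.exp (-h * L (ω k + 1)) * X (ω k + 1)
        + Real.exp (-h * L (ω k)) * Xb (ω k))
    (eqX : ∀ k, X k = Real.exp (-h * L (k + 1)) * X (k + 1)
        + Real.exp (-h * ℓ' k) * Y k)
    (eqXb : ∀ k, Xb k = Real.exp (-h * L (k - 1)) * Xb (k - 1)
        + Real.exp (-h * ℓ' (k - 1)) * Y (k - 1))
    (k : ZMod N) :
    2 * Real.exp (-(h * ∑ m, L m) / 2)
        * ((∑ m, Real.exp (-h * ℓ' m) * Y m)
            - Real.exp (-h * ℓ' (ω k)) * Y (ω k))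
      + 2 * Real.exp (-(h * ∑ m, L m)) * (Real.exp (-h * ℓ' (ω k)) * Y (ω k))
      ≤ (1 - Real.exp (-(h * ∑ m, L m))) * Y k := by
  set Λ : ℝ := ∑ m, L m with hLam
  set q : ℝ := Real.exp (-(h * Λ)) with hqdef
  set s : ℝ := Real.exp (-(h * Λ) / 2) with hsdef
  set T : ℝ := ∑ m, Real.exp (-h * ℓ' m) * Y m with hTdef
  set p : ZMod N := ω k with hpdef
  set κ : ZMod N := p + 1 with hκdef
  have hs0 : 0 < s := Real.exp_pos _
  have hsq : s ^ 2 = q := by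
    rw [hsdef, hqdef, sq, ← Real.exp_add]; congr 1; ring
  set M : ℕ := N - 1 with hMdef
  have hMN : N = M + 1 := by omega
  have castsub : ∀ a : ℕ, a ≤ N → ((N - a : ℕ) : ZMod N) = -(a : ZMod N) := by
    intro a ha
    rw [Nat.cast_sub ha, ZMod.natCast_self]; ring
  have split : ∀ f : ℕ → ℝ,
      ∑ i ∈ Finset.range N, f i = (∑ i ∈ Finset.range M, f i) + f M := by
    intro f; rw [hMN, Finset.sum_range_succ]
  have split' : ∀ f : ℕ → ℝ,
      ∑ i ∈ Finset.range N, f i = (∑ i ∈ Finset.range M, f (i + 1)) + f 0 := by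
    intro f; rw [hMN, Finset.sum_range_succ']
  have splitat : ∀ (f : ℕ → ℝ) (a c : ℕ), N = a + c →
      ∑ i ∈ Finset.range N, f i
        = (∑ i ∈ Finset.range a, f i) + ∑ t ∈ Finset.range c, f (a + t) := by
    intro f a c hac; rw [hac, Finset.sum_range_add]
  have idxM : κ + ((M : ℕ) : ZMod N) = p := by
    rw [hMdef, castsub 1 (by omega), hκdef]; push_cast; ring
  have idxMB : p - 1 - ((M : ℕ) : ZMod N) = p := by
    rw [hMdef, castsub 1 (by omega)]; push_cast; ring
  -- forward unroll at κ
  have hxA : ∀ i : ℕ, X (κ + (i : ZMod N))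
      = Real.exp (-h * L (κ + 1 + (i : ZMod N))) * X (κ + ((i + 1 : ℕ) : ZMod N))
        + Real.exp (-h * ℓ' (κ + (i : ZMod N))) * Y (κ + (i : ZMod N)) := by
    intro i
    have i1 : κ + 1 + (i : ZMod N) = κ + (i : ZMod N) + 1 := by ring
    have i2 : κ + ((i + 1 : ℕ) : ZMod N) = κ + (i : ZMod N) + 1 := by push_cast; ring
    rw [i1, i2]; exact eqX _
  have HA : X κ = Real.exp (-h * ∑ i ∈ Finset.range N, L (κ + 1 + (i : ZMod N))) * X κ
      + ∑ i ∈ Finset.range N,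
          Real.exp (-h * ∑ i' ∈ Finset.range i, L (κ + 1 + (i' : ZMod N)))
            * (Real.exp (-h * ℓ' (κ + (i : ZMod N))) * Y (κ + (i : ZMod N))) := by
    have := unroll_nat h (fun i => X (κ + (i : ZMod N))) (fun i => Y (κ + (i : ZMod N)))
      (fun i => L (κ + 1 + (i : ZMod N))) (fun i => ℓ' (κ + (i : ZMod N))) hxA N
    simpa only [Nat.cast_zero, add_zero, ZMod.natCast_self] using this
  have hxB : ∀ i : ℕ, Xb (p - (i : ZMod N))
      = Real.exp (-h * L (p - 1 - (i : ZMod N))) * Xb (p - ((i + 1 : ℕ) : ZMod N))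
        + Real.exp (-h * ℓ' (p - 1 - (i : ZMod N))) * Y (p - 1 - (i : ZMod N)) := by
    intro i
    have i1 : p - 1 - (i : ZMod N) = p - (i : ZMod N) - 1 := by ring
    have i2 : p - ((i + 1 : ℕ) : ZMod N) = p - (i : ZMod N) - 1 := by push_cast; ring
    rw [i1, i2]; exact eqXb _
  have HB : Xb p = Real.exp (-h * ∑ i ∈ Finset.range N, L (p - 1 - (i : ZMod N))) * Xb p
      + ∑ i ∈ Finset.range N,
          Real.exp (-h * ∑ i' ∈ Finset.range i, L (p - 1 - (i' : ZMod N)))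
            * (Real.exp (-h * ℓ' (p - 1 - (i : ZMod N))) * Y (p - 1 - (i : ZMod N))) := by
    have := unroll_nat h (fun i => Xb (p - (i : ZMod N))) (fun i => Y (p - 1 - (i : ZMod N)))
      (fun i => L (p - 1 - (i : ZMod N))) (fun i => ℓ' (p - 1 - (i : ZMod N))) hxB N
    simpa only [Nat.cast_zero, sub_zero, ZMod.natCast_self] using this
  have sumA : ∑ i ∈ Finset.range N, L (κ + 1 + (i : ZMod N)) = Λ := by
    rw [hLam]; exact sum_zmod_add N (κ + 1) L
  have sumB : ∑ i ∈ Finset.range N, L (p - 1 - (i : ZMod N)) = Λ := by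
    rw [hLam]; exact sum_zmod_sub N (p - 1) L
  have hqΛ : Real.exp (-h * Λ) = q := by rw [hqdef]; congr 1; ring
  rw [sumA, hqΛ] at HA
  rw [sumB, hqΛ] at HB
  have HA' : (1 - q) * X κ = ∑ i ∈ Finset.range N,
      Real.exp (-h * ∑ i' ∈ Finset.range i, L (κ + 1 + (i' : ZMod N)))
        * (Real.exp (-h * ℓ' (κ + (i : ZMod N))) * Y (κ + (i : ZMod N))) := by
    linarith [HA]
  have HB' : (1 - q) * Xb p = ∑ i ∈ Finset.range N,
      Real.exp (-h * ∑ i' ∈ Finset.range i, L (p - 1 - (i' : ZMod N)))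
        * (Real.exp (-h * ℓ' (p - 1 - (i : ZMod N))) * Y (p - 1 - (i : ZMod N))) := by
    linarith [HB]
  -- the master identity
  have EY := eqY k
  rw [← hpdef, ← hκdef] at EY
  have EYq : (1 - q) * Y k
      = Real.exp (-h * L κ) * ((1 - q) * X κ)
        + Real.exp (-h * L p) * ((1 - q) * Xb p) := by rw [EY]; ring
  rw [HA', HB', Finset.mul_sum, Finset.mul_sum, split, split] at EYq
  -- arc-length identities
  have e1 : ∀ i : ℕ, (∑ i' ∈ Finset.range i, L (κ + 1 + (i' : ZMod N))) + L κ
      = ∑ i' ∈ Finset.range (i + 1), L (κ + (i' : ZMod N)) := by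
    intro i
    rw [Finset.sum_range_succ']
    simp only [Nat.cast_zero, add_zero]
    congr 1
    exact Finset.sum_congr rfl fun j _ => by congr 1; push_cast; ring
  have e2 : ∀ j : ℕ, (∑ i' ∈ Finset.range j, L (p - 1 - (i' : ZMod N))) + L p
      = ∑ i' ∈ Finset.range (j + 1), L (p - (i' : ZMod N)) := by
    intro j
    rw [Finset.sum_range_succ']
    simp only [Nat.cast_zero, sub_zero]
    congr 1
    exact Finset.sum_congr rfl fun j _ => by congr 1; push_cast; ring
  have e3 : ∀ i : ℕ, i < M →
      (∑ i' ∈ Finset.range (i + 1), L (κ + (i' : ZMod N)))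
        + (∑ i' ∈ Finset.range (M - i), L (p - (i' : ZMod N))) = Λ := by
    intro i hi
    have h4 : Λ = ∑ i' ∈ Finset.range N, L (κ + (i' : ZMod N)) := by
      rw [hLam]; exact (sum_zmod_add N κ L).symm
    rw [h4, splitat (fun i' => L (κ + (i' : ZMod N))) (i + 1) (M - i) (by omega)]
    congr 1
    have hrefl := Finset.sum_range_reflect (fun i' => L (p - (i' : ZMod N))) (M - i)
    rw [← hrefl]
    refine Finset.sum_congr rfl fun t ht => ?_
    have htt : t < M - i := Finset.mem_range.1 ht
    congr 1
    have c1 : (M - i - 1 - t : ℕ) = N - (2 + i + t) := by omega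
    rw [c1, castsub (2 + i + t) (by omega), hκdef]
    push_cast; ring
  -- the two leftover diagonal terms
  have gAM : Real.exp (-h * L κ)
      * (Real.exp (-h * ∑ i' ∈ Finset.range M, L (κ + 1 + (i' : ZMod N)))
        * (Real.exp (-h * ℓ' (κ + (M : ZMod N))) * Y (κ + (M : ZMod N))))
      = q * (Real.exp (-h * ℓ' p) * Y p) := by
    rw [idxM, ← mul_assoc, ← Real.exp_add]
    have h5 : ∑ i' ∈ Finset.range (M + 1), L (κ + (i' : ZMod N)) = Λ := by
      rw [← hMN, hLam]; exact sum_zmod_add N κ L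
    have h6 := e1 M
    rw [hqdef]
    congr 2
    linear_combination (-h) * (h6.trans h5)
  have gBM : Real.exp (-h * L p)
      * (Real.exp (-h * ∑ i' ∈ Finset.range M, L (p - 1 - (i' : ZMod N)))
        * (Real.exp (-h * ℓ' (p - 1 - (M : ZMod N))) * Y (p - 1 - (M : ZMod N))))
      = q * (Real.exp (-h * ℓ' p) * Y p) := by
    rw [idxMB, ← mul_assoc, ← Real.exp_add]
    have h5 : ∑ i' ∈ Finset.range (M + 1), L (p - (i' : ZMod N)) = Λ := by
      rw [← hMN, hLam]; exact sum_zmod_sub N p L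
    have h6 := e2 M
    rw [hqdef]
    congr 2
    linear_combination (-h) * (h6.trans h5)
  rw [gAM, gBM] at EYq
  -- the per-term AM-GM bound
  have hub : ∀ i ∈ Finset.range M,
      2 * s * (Real.exp (-h * ℓ' (κ + (i : ZMod N))) * Y (κ + (i : ZMod N)))
      ≤ Real.exp (-h * L κ)
          * (Real.exp (-h * ∑ i' ∈ Finset.range i, L (κ + 1 + (i' : ZMod N)))
            * (Real.exp (-h * ℓ' (κ + (i : ZMod N))) * Y (κ + (i : ZMod N))))
        + Real.exp (-h * L p)
          * (Real.exp (-h * ∑ i' ∈ Finset.range (M - 1 - i), L (p - 1 - (i' : ZMod N)))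
            * (Real.exp (-h * ℓ' (p - 1 - ((M - 1 - i : ℕ) : ZMod N)))
              * Y (p - 1 - ((M - 1 - i : ℕ) : ZMod N)))) := by
    intro i hi
    have hiM : i < M := Finset.mem_range.1 hi
    have idx : p - 1 - ((M - 1 - i : ℕ) : ZMod N) = κ + (i : ZMod N) := by
      have c1 : (M - 1 - i : ℕ) = N - (2 + i) := by omega
      rw [c1, castsub (2 + i) (by omega), hκdef]
      push_cast; ring
    rw [idx]
    have comb : ∀ u v u' v' z : ℝ,
        Real.exp u * (Real.exp v * z) + Real.exp u' * (Real.exp v' * z)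
          = (Real.exp (u + v) + Real.exp (u' + v')) * z := by
      intros; rw [Real.exp_add, Real.exp_add]; ring
    rw [comb]
    refine mul_le_mul_of_nonneg_right ?_
      (le_of_lt (mul_pos (Real.exp_pos _) (hY _)))
    refine amgm _ _ _ (Real.exp_pos _) hs0 ?_
    rw [← Real.exp_add, hsq, hqdef]
    congr 1
    have eA := e1 i
    have eB := e2 (M - 1 - i)
    have eC := e3 i hiM
    have e5 : (M - 1 - i) + 1 = M - i := by omega
    rw [e5] at eB
    linear_combination (-h) * eA + (-h) * eB + (-h) * eC
  have hmono := Finset.sum_le_sum hub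
  have hdist : ∑ i ∈ Finset.range M,
      (Real.exp (-h * L κ)
          * (Real.exp (-h * ∑ i' ∈ Finset.range i, L (κ + 1 + (i' : ZMod N)))
            * (Real.exp (-h * ℓ' (κ + (i : ZMod N))) * Y (κ + (i : ZMod N))))
        + Real.exp (-h * L p)
          * (Real.exp (-h * ∑ i' ∈ Finset.range (M - 1 - i), L (p - 1 - (i' : ZMod N)))
            * (Real.exp (-h * ℓ' (p - 1 - ((M - 1 - i : ℕ) : ZMod N)))
              * Y (p - 1 - ((M - 1 - i : ℕ) : ZMod N)))))
      = (∑ i ∈ Finset.range M, Real.exp (-h * L κ)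
          * (Real.exp (-h * ∑ i' ∈ Finset.range i, L (κ + 1 + (i' : ZMod N)))
            * (Real.exp (-h * ℓ' (κ + (i : ZMod N))) * Y (κ + (i : ZMod N)))))
        + ∑ i ∈ Finset.range M, Real.exp (-h * L p)
          * (Real.exp (-h * ∑ i' ∈ Finset.range (M - 1 - i), L (p - 1 - (i' : ZMod N)))
            * (Real.exp (-h * ℓ' (p - 1 - ((M - 1 - i : ℕ) : ZMod N)))
              * Y (p - 1 - ((M - 1 - i : ℕ) : ZMod N)))) := Finset.sum_add_distrib
  have hrefl2 : ∑ i ∈ Finset.range M, Real.exp (-h * L p)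
          * (Real.exp (-h * ∑ i' ∈ Finset.range (M - 1 - i), L (p - 1 - (i' : ZMod N)))
            * (Real.exp (-h * ℓ' (p - 1 - ((M - 1 - i : ℕ) : ZMod N)))
              * Y (p - 1 - ((M - 1 - i : ℕ) : ZMod N))))
      = ∑ i ∈ Finset.range M, Real.exp (-h * L p)
          * (Real.exp (-h * ∑ i' ∈ Finset.range i, L (p - 1 - (i' : ZMod N)))
            * (Real.exp (-h * ℓ' (p - 1 - (i : ZMod N)))
              * Y (p - 1 - (i : ZMod N)))) :=
    Finset.sum_range_reflect (fun i => Real.exp (-h * L p)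
          * (Real.exp (-h * ∑ i' ∈ Finset.range i, L (p - 1 - (i' : ZMod N)))
            * (Real.exp (-h * ℓ' (p - 1 - (i : ZMod N)))
              * Y (p - 1 - (i : ZMod N))))) M
  have hbbT : (∑ i ∈ Finset.range M,
        Real.exp (-h * ℓ' (κ + (i : ZMod N))) * Y (κ + (i : ZMod N)))
      = T - Real.exp (-h * ℓ' p) * Y p := by
    have h0 : ∑ i ∈ Finset.range N,
        Real.exp (-h * ℓ' (κ + (i : ZMod N))) * Y (κ + (i : ZMod N)) = T := by
      rw [hTdef]; exact sum_zmod_add N κ (fun m => Real.exp (-h * ℓ' m) * Y m)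
    rw [split, idxM] at h0
    linarith
  have hsum2 : 2 * s * (T - Real.exp (-h * ℓ' p) * Y p)
      = ∑ i ∈ Finset.range M,
          2 * s * (Real.exp (-h * ℓ' (κ + (i : ZMod N))) * Y (κ + (i : ZMod N))) := by
    rw [← hbbT, Finset.mul_sum]
  linarith [hmono, hdist, hrefl2, EYq, hsum2]

set_option maxHeartbeats 2000000 in
/-- Upper bound in the Basmajian-type inequality for metric graphs
(Theorem 2, upper bound), stated via Lim's system of equations. -/
theorem sum_lt_sinh_of_lim_system
    (n : ℕ) [NeZero n] (hn : 1 ≤ n) (h : ℝ) (hh : 0 < h)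
    (L ℓ' X Xb Y : ZMod (2 * n) → ℝ)
    (ω : ZMod (2 * n) → ZMod (2 * n))
    (hL : ∀ k, 0 < L k)
    (hω : ∀ k, ω (ω k) = k) (hω' : ∀ k, ω k ≠ k)
    (hℓpos : ∀ k, 0 < ℓ' k) (hℓω : ∀ k, ℓ' (ω k) = ℓ' k)
    (hX : ∀ k, 0 < X k) (hXb : ∀ k, 0 < Xb k) (hY : ∀ k, 0 < Y k)
    (eqY : ∀ k, Y k = Real.exp (-h * L (ω k + 1)) * X (ω k + 1)
        + Real.exp (-h * L (ω k)) * Xb (ω k))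
    (eqX : ∀ k, X k = Real.exp (-h * L (k + 1)) * X (k + 1)
        + Real.exp (-h * ℓ' k) * Y k)
    (eqXb : ∀ k, Xb k = Real.exp (-h * L (k - 1)) * Xb (k - 1)
        + Real.exp (-h * ℓ' (k - 1)) * Y (k - 1)) :
    (∑ k, 1 / (1 + Real.exp (h * ℓ' k))) < Real.sinh (h * (∑ k, L k) / 2) := by
  haveI : NeZero (2 * n) := ⟨by omega⟩
  have hN2 : 2 ≤ 2 * n := by omega
  set Λ : ℝ := ∑ k, L k with hLam
  have hΛpos : 0 < Λ := Finset.sum_pos (fun k _ => hL k) Finset.univ_nonempty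
  set q : ℝ := Real.exp (-(h * Λ)) with hqdef
  set s : ℝ := Real.exp (-(h * Λ) / 2) with hsdef
  have hq0 : 0 < q := Real.exp_pos _
  have hs0 : 0 < s := Real.exp_pos _
  have hq1 : q < 1 := by
    rw [hqdef]; apply Real.exp_lt_one_iff.2; nlinarith
  have hs1 : s < 1 := by
    rw [hsdef]; apply Real.exp_lt_one_iff.2; nlinarith
  have hsq : s ^ 2 = q := by
    rw [hsdef, hqdef, sq, ← Real.exp_add]; congr 1; ring
  set b : ZMod (2 * n) → ℝ := fun m => Real.exp (-h * ℓ' m) with hbdef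
  have hb0 : ∀ m, 0 < b m := fun m => Real.exp_pos _
  have hbω : ∀ m, b (ω m) = b m := by intro m; simp only [hbdef, hℓω]
  set T : ℝ := ∑ m, b m * Y m with hTdef
  have key : ∀ k, 2 * s * (T - b (ω k) * Y (ω k)) + 2 * q * (b (ω k) * Y (ω k))
      ≤ (1 - q) * Y k := by
    intro k
    exact key_ineq (2 * n) hN2 h hh L ℓ' X Xb Y ω hL hℓpos hX hXb hY eqY eqX eqXb k
  -- denominators
  set den : ZMod (2 * n) → ℝ := fun m => (1 - q) + (2 * s - 2 * q) * b m with hdendef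
  have hsq2 : 2 * q < 2 * s := by nlinarith
  have hden0 : ∀ m, 0 < den m := by
    intro m; have := hb0 m; simp only [hdendef]; nlinarith
  set w : ZMod (2 * n) → ℝ := fun m => (Y m + Y (ω m)) * den m with hwdef
  obtain ⟨k0, -, hk0⟩ := Finset.exists_min_image Finset.univ w Finset.univ_nonempty
  have hw0 : 0 < w k0 := by
    have := hY k0; have := hY (ω k0); have := hden0 k0
    simp only [hwdef]; nlinarith
  -- 4 s T ≤ w k0
  have hkey2 : 4 * s * T ≤ w k0 := by
    have h1 := key k0
    have h2 := key (ω k0)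
    rw [hbω k0] at h1
    rw [hω k0] at h2
    show 4 * s * T ≤ (Y k0 + Y (ω k0)) * ((1 - q) + (2 * s - 2 * q) * b k0)
    nlinarith [h1, h2]
  -- 2T ≥ w k0 * ∑ b/den
  have hT2 : ∑ m, b m * (Y m + Y (ω m)) = 2 * T := by
    have : ∑ m, b m * Y (ω m) = T := by
      rw [hTdef]
      have hbij : Function.Bijective ω := Function.Involutive.bijective hω
      calc ∑ m, b m * Y (ω m) = ∑ m, b (ω m) * Y (ω m) := by
            refine Finset.sum_congr rfl fun m _ => by rw [hbω]
        _ = ∑ m, b m * Y m := Fintype.sum_bijective ω hbij _ _ (fun m => rfl)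
    calc ∑ m, b m * (Y m + Y (ω m))
        = (∑ m, b m * Y m) + ∑ m, b m * Y (ω m) := by
          rw [← Finset.sum_add_distrib]; exact Finset.sum_congr rfl fun m _ => by ring
      _ = 2 * T := by rw [this, hTdef]; ring
  have hlow : w k0 * ∑ m, b m / den m ≤ 2 * T := by
    rw [← hT2, Finset.mul_sum]
    refine Finset.sum_le_sum fun m _ => ?_
    have hm : w k0 ≤ w m := hk0 m (Finset.mem_univ m)
    have hd := hden0 m
    have hbm := hb0 m
    rw [div_eq_mul_inv]
    have : w k0 * (b m * (den m)⁻¹) = b m * (w k0 / den m) := by ring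
    rw [this]
    have h2 : w k0 / den m ≤ Y m + Y (ω m) := by
      rw [div_le_iff₀ hd]
      calc w k0 ≤ w m := hm
        _ = (Y m + Y (ω m)) * den m := rfl
    exact mul_le_mul_of_nonneg_left h2 hbm.le
  have hmain : 2 * s * ∑ m, b m / den m ≤ 1 := by
    have h4 : 2 * s * (w k0 * ∑ m, b m / den m) ≤ 2 * s * (2 * T) :=
      mul_le_mul_of_nonneg_left hlow (by positivity)
    have h5 : 2 * s * (2 * T) = 4 * s * T := by ring
    rw [h5] at h4
    have h6 : 2 * s * (w k0 * ∑ m, b m / den m) ≤ w k0 := le_trans h4 hkey2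
    have h7 : w k0 * (2 * s * ∑ m, b m / den m) ≤ w k0 * 1 := by
      rw [mul_one]; calc w k0 * (2 * s * ∑ m, b m / den m)
          = 2 * s * (w k0 * ∑ m, b m / den m) := by ring
        _ ≤ w k0 := h6
    exact le_of_mul_le_mul_left h7 hw0
  -- per-term strict bound
  have hterm : ∀ m : ZMod (2 * n), 1 / (1 + Real.exp (h * ℓ' m))
      < (1 - q) * (b m / den m) := by
    intro m
    have hbm := hb0 m
    have hd := hden0 m
    have hexp : Real.exp (h * ℓ' m) * b m = 1 := by
      show Real.exp (h * ℓ' m) * Real.exp (-h * ℓ' m) = 1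
      rw [← Real.exp_add, show h * ℓ' m + -h * ℓ' m = 0 by ring, Real.exp_zero]
    have h1 : 1 / (1 + Real.exp (h * ℓ' m)) = b m / (1 + b m) := by
      rw [div_eq_div_iff (by positivity) (by positivity)]
      nlinarith [hexp]
    have hclt : 2 * s < 1 + q := by nlinarith [sq_nonneg (1 - s)]
    have hdm : den m = (1 - q) + (2 * s - 2 * q) * b m := rfl
    rw [h1, mul_div_assoc' (1 - q) (b m) (den m),
      div_lt_div_iff₀ (by nlinarith [hbm]) hd]
    rw [hdm]
    nlinarith [hbm, hclt, mul_pos hbm hbm]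
  have hsinh : Real.sinh (h * Λ / 2) = (1 - q) / (2 * s) := by
    rw [Real.sinh_eq, hqdef, hsdef]
    have e1 : Real.exp (-(h * Λ) / 2) * Real.exp (h * Λ / 2) = 1 := by
      rw [← Real.exp_add, show -(h * Λ) / 2 + h * Λ / 2 = 0 by ring, Real.exp_zero]
    have e2 : Real.exp (-(h * Λ / 2)) = Real.exp (-(h * Λ) / 2) := by congr 1; ring
    have e3 : Real.exp (-(h * Λ)) = Real.exp (-(h * Λ) / 2) * Real.exp (-(h * Λ) / 2) := by
      rw [← Real.exp_add]; congr 1; ring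
    rw [e2, e3]
    field_simp
    nlinarith [e1]
  calc (∑ m, 1 / (1 + Real.exp (h * ℓ' m)))
      < ∑ m, (1 - q) * (b m / den m) :=
        Finset.sum_lt_sum_of_nonempty Finset.univ_nonempty fun m _ => hterm m
    _ = (1 - q) * ∑ m, b m / den m := by rw [Finset.mul_sum]
    _ ≤ (1 - q) / (2 * s) := by
        rw [div_eq_mul_inv]
        have : ∑ m, b m / den m ≤ (2 * s)⁻¹ := by
          rw [← one_div]
          rw [le_div_iff₀ (by positivity)]
          calc (∑ m, b m / den m) * (2 * s) = 2 * s * ∑ m, b m / den m := by ring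
            _ ≤ 1 := hmain
        exact mul_le_mul_of_nonneg_left this (by nlinarith)
    _ = Real.sinh (h * Λ / 2) := hsinh.symm
end

section
/- Under Lim's system hypotheses with the edge lengths on the circle allowed to vanish (i.e. L_k ≥ 0 for all k but with total Λ > 0; all other hypotheses unchanged), the non-strict double inequality holds: tanh(h·Λ/2) ≤ Σ_{k ∈ ZMod(2n)} 1/(1 + exp(h·ℓ'_k)) ≤ sinh(h·Λ/2). (This is the degenerate-edge extension of Theorem 2 discussed in the optimality subsection of the paper.) -/
open Finset

private lemma zmod_sum_range' {N : ℕ} [NeZero N] (f : ZMod N → ℝ) :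
    ∑ j ∈ Finset.range N, f (j : ZMod N) = ∑ z : ZMod N, f z := by
  refine Finset.sum_nbij' (i := fun j => ((j : ℕ) : ZMod N)) (j := fun z => z.val)
    (fun a _ => Finset.mem_univ _) (fun z _ => Finset.mem_range.2 z.val_lt)
    (fun a ha => ZMod.val_natCast_of_lt (Finset.mem_range.1 ha))
    (fun z _ => ZMod.natCast_zmod_val z)
    (fun a _ => rfl)

private lemma zmod_prod_range' {N : ℕ} [NeZero N] (f : ZMod N → ℝ) :
    ∏ j ∈ Finset.range N, f (j : ZMod N) = ∏ z : ZMod N, f z := by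
  refine Finset.prod_nbij' (i := fun j => ((j : ℕ) : ZMod N)) (j := fun z => z.val)
    (fun a _ => Finset.mem_univ _) (fun z _ => Finset.mem_range.2 z.val_lt)
    (fun a ha => ZMod.val_natCast_of_lt (Finset.mem_range.1 ha))
    (fun z _ => ZMod.natCast_zmod_val z)
    (fun a _ => rfl)

private lemma zmod_sum_shift {N : ℕ} [NeZero N] (g : ZMod N → ℝ) (c : ZMod N) :
    ∑ j ∈ Finset.range N, g (c + (j : ZMod N)) = ∑ z : ZMod N, g z := by
  rw [zmod_sum_range' (fun z => g (c + z))]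
  exact Fintype.sum_bijective _ (AddGroup.addLeft_bijective c) _ _ (fun z => rfl)

private lemma zmod_prod_shift {N : ℕ} [NeZero N] (g : ZMod N → ℝ) (c : ZMod N) :
    ∏ j ∈ Finset.range N, g (c + (j : ZMod N)) = ∏ z : ZMod N, g z := by
  rw [zmod_prod_range' (fun z => g (c + z))]
  exact Fintype.prod_bijective _ (AddGroup.addLeft_bijective c) _ _ (fun z => rfl)

/-- Telescoping unrolling of the `X`-recursion once around the circle. -/
private lemma unroll_X {N : ℕ} [NeZero N] (a Z W : ZMod N → ℝ) (q : ℝ)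
    (hq : ∀ c : ZMod N, ∏ i ∈ Finset.range N, a (c + (i : ZMod N)) = q)
    (eq : ∀ k, W k = a (k + 1) * W (k + 1) + Z k) (k : ZMod N) :
    (1 - q) * W k
      = ∑ j ∈ Finset.range N,
          (∏ i ∈ Finset.range j, a (k + 1 + (i : ZMod N))) * Z (k + (j : ZMod N)) := by
  set F : ℕ → ℝ :=
    fun j => (∏ i ∈ Finset.range j, a (k + 1 + (i : ZMod N))) * W (k + (j : ZMod N)) with hF
  have key : ∀ j ∈ Finset.range N,
      (∏ i ∈ Finset.range j, a (k + 1 + (i : ZMod N))) * Z (k + (j : ZMod N))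
        = F j - F (j + 1) := by
    intro j _
    have h1 : ((j + 1 : ℕ) : ZMod N) = (j : ZMod N) + 1 := by push_cast; ring
    have h2 : k + 1 + (j : ZMod N) = k + (j : ZMod N) + 1 := by ring
    rw [hF]
    simp only [Finset.prod_range_succ, h1]
    rw [eq (k + (j : ZMod N)), h2]
    ring
  rw [Finset.sum_congr rfl key, Finset.sum_range_sub' F N]
  have h0 : F 0 = W k := by simp [hF]
  have hN : F N = q * W k := by
    rw [hF]
    simp only [ZMod.natCast_self, add_zero]
    rw [hq (k + 1)]
  rw [h0, hN]; ring

/-- Telescoping unrolling of the `Xb`-recursion once around the circle. -/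
private lemma unroll_Xb {N : ℕ} [NeZero N] (a Z W : ZMod N → ℝ) (q : ℝ)
    (hq : ∀ c : ZMod N, ∏ i ∈ Finset.range N, a (c - (i : ZMod N)) = q)
    (eq : ∀ k, W k = a (k - 1) * W (k - 1) + Z (k - 1)) (k : ZMod N) :
    (1 - q) * W k
      = ∑ j ∈ Finset.range N,
          (∏ i ∈ Finset.range j, a (k - 1 - (i : ZMod N))) * Z (k - 1 - (j : ZMod N)) := by
  set F : ℕ → ℝ :=
    fun j => (∏ i ∈ Finset.range j, a (k - 1 - (i : ZMod N))) * W (k - (j : ZMod N)) with hF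
  have key : ∀ j ∈ Finset.range N,
      (∏ i ∈ Finset.range j, a (k - 1 - (i : ZMod N))) * Z (k - 1 - (j : ZMod N))
        = F j - F (j + 1) := by
    intro j _
    have h1 : ((j + 1 : ℕ) : ZMod N) = (j : ZMod N) + 1 := by push_cast; ring
    have h2 : k - (j : ZMod N) - 1 = k - 1 - (j : ZMod N) := by ring
    have h3 : k - ((j : ZMod N) + 1) = k - 1 - (j : ZMod N) := by ring
    rw [hF]
    simp only [Finset.prod_range_succ, h1]
    rw [eq (k - (j : ZMod N)), h2, h3]
    ring
  rw [Finset.sum_congr rfl key, Finset.sum_range_sub' F N]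
  have h0 : F 0 = W k := by simp [hF]
  have hN : F N = q * W k := by
    rw [hF]
    simp only [ZMod.natCast_self, sub_zero]
    rw [hq (k - 1)]
  rw [h0, hN]; ring

set_option maxHeartbeats 2000000 in
/-- Degenerate-edge extension of Theorem 2: with circle edge lengths allowed
to vanish (but positive total length), the non-strict double inequality
tanh(hΛ/2) ≤ Σ 1/(1+exp(hℓ'ₖ)) ≤ sinh(hΛ/2) holds. -/
theorem tanh_le_sum_le_sinh_of_lim_system_degenerate
    (n : ℕ) [NeZero n] (hn : 1 ≤ n) (h : ℝ) (hh : 0 < h)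
    (L ℓ' X Xb Y : ZMod (2 * n) → ℝ)
    (ω : ZMod (2 * n) → ZMod (2 * n))
    (hL : ∀ k, 0 ≤ L k) (hΛ : 0 < ∑ k, L k)
    (hω : ∀ k, ω (ω k) = k) (hω' : ∀ k, ω k ≠ k)
    (hℓpos : ∀ k, 0 < ℓ' k) (hℓω : ∀ k, ℓ' (ω k) = ℓ' k)
    (hX : ∀ k, 0 < X k) (hXb : ∀ k, 0 < Xb k) (hY : ∀ k, 0 < Y k)
    (eqY : ∀ k, Y k = Real.exp (-h * L (ω k + 1)) * X (ω k + 1)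
        + Real.exp (-h * L (ω k)) * Xb (ω k))
    (eqX : ∀ k, X k = Real.exp (-h * L (k + 1)) * X (k + 1)
        + Real.exp (-h * ℓ' k) * Y k)
    (eqXb : ∀ k, Xb k = Real.exp (-h * L (k - 1)) * Xb (k - 1)
        + Real.exp (-h * ℓ' (k - 1)) * Y (k - 1)) :
    Real.tanh (h * (∑ k, L k) / 2) ≤ ∑ k, 1 / (1 + Real.exp (h * ℓ' k)) ∧
      (∑ k, 1 / (1 + Real.exp (h * ℓ' k))) ≤ Real.sinh (h * (∑ k, L k) / 2) := by
  classical
  have hn0 : n ≠ 0 := by omega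
  haveI : NeZero (2 * n) := ⟨by omega⟩
  -- abbreviations
  obtain ⟨a, ha⟩ : ∃ a : ZMod (2 * n) → ℝ, a = fun m => Real.exp (-h * L m) := ⟨_, rfl⟩
  obtain ⟨b, hb⟩ : ∃ b : ZMod (2 * n) → ℝ, b = fun m => Real.exp (-h * ℓ' m) := ⟨_, rfl⟩
  obtain ⟨Z, hZd⟩ : ∃ Z : ZMod (2 * n) → ℝ,
      Z = fun m => Real.exp (-h * ℓ' m) * Y m := ⟨_, rfl⟩
  set Λv := ∑ k, L k with hΛv
  set q : ℝ := Real.exp (-(h * Λv)) with hqdef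
  set r : ℝ := Real.exp (-(h * Λv) / 2) with hrdef
  have hΛpos : 0 < Λv := hΛ
  have hr0 : 0 < r := Real.exp_pos _
  have hr1 : r < 1 := by
    rw [hrdef]
    apply Real.exp_lt_one_iff.2
    nlinarith
  have hq_rr : q = r * r := by
    rw [hqdef, hrdef, ← Real.exp_add]; congr 1; ring
  have hq0 : 0 < q := Real.exp_pos _
  have hq1 : q < 1 := by nlinarith
  have hapos : ∀ m, 0 < a m := by intro m; rw [ha]; exact Real.exp_pos _
  have hale : ∀ m, a m ≤ 1 := by
    intro m; rw [ha]
    apply Real.exp_le_one_iff.2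
    have := hL m; nlinarith
  have hbpos : ∀ m, 0 < b m := by intro m; rw [hb]; exact Real.exp_pos _
  have hZpos : ∀ m, 0 < Z m := by
    intro m; rw [hZd]
    exact mul_pos (Real.exp_pos _) (hY m)
  have hZb : ∀ m, Z m = b m * Y m := by intro m; rw [hZd, hb]
  have hbω : ∀ kk, b (ω kk) = b kk := by intro kk; rw [hb]; simp only [hℓω kk]
  -- recursions in abbreviated form
  have eqX' : ∀ k, X k = a (k + 1) * X (k + 1) + Z k := by
    intro k; simp only [ha, hZd]; exact eqX k
  have eqXb' : ∀ k, Xb k = a (k - 1) * Xb (k - 1) + Z (k - 1) := by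
    intro k; simp only [ha, hZd]; exact eqXb k
  -- full-circle products
  have hqplus : ∀ c : ZMod (2 * n),
      ∏ i ∈ Finset.range (2 * n), a (c + (i : ZMod (2 * n))) = q := by
    intro c
    rw [zmod_prod_shift a c]
    have hsum : ∑ z : ZMod (2 * n), (-h * L z) = -(h * Λv) := by
      rw [← Finset.mul_sum, hΛv]; ring
    calc ∏ z : ZMod (2 * n), a z = ∏ z : ZMod (2 * n), Real.exp (-h * L z) := by rw [ha]
      _ = Real.exp (∑ z : ZMod (2 * n), (-h * L z)) := (Real.exp_sum _ _).symm
      _ = q := by rw [hsum, hqdef]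
  have hqminus : ∀ c : ZMod (2 * n),
      ∏ i ∈ Finset.range (2 * n), a (c - (i : ZMod (2 * n))) = q := by
    intro c
    calc ∏ i ∈ Finset.range (2 * n), a (c - (i : ZMod (2 * n)))
        = ∏ j ∈ Finset.range (2 * n), a (c - ((2 * n - 1 - j : ℕ) : ZMod (2 * n))) :=
          (Finset.prod_range_reflect (fun j => a (c - (j : ZMod (2 * n)))) (2 * n)).symm
      _ = ∏ j ∈ Finset.range (2 * n), a ((c + 1) + (j : ZMod (2 * n))) := by
          apply Finset.prod_congr rfl
          intro j hj
          congr 1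
          have hnat : (2 * n - 1 - j) + (j + 1) = 2 * n := by
            have := Finset.mem_range.1 hj; omega
          have hc := congrArg (fun m : ℕ => (m : ZMod (2 * n))) hnat
          simp only [Nat.cast_add, Nat.cast_one, ZMod.natCast_self] at hc
          linear_combination -hc
      _ = q := hqplus (c + 1)
  -- unrolled recursions
  have hXun := unroll_X a Z X q hqplus eqX'
  have hXbun := unroll_Xb a Z Xb q hqminus eqXb'
  -- the total weight T
  set T := ∑ z : ZMod (2 * n), Z z with hT
  have hTpos : 0 < T := Finset.sum_pos (fun z _ => hZpos z) Finset.univ_nonempty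
  have hTsub : ∀ k : ZMod (2 * n),
      ∑ j ∈ Finset.range (2 * n - 1), Z (k + 1 + (j : ZMod (2 * n))) = T - Z k := by
    intro k
    have h1 : ∑ j ∈ Finset.range (2 * n), Z (k + (j : ZMod (2 * n))) = T := zmod_sum_shift Z k
    have h2 : ∑ j ∈ Finset.range ((2 * n - 1) + 1), Z (k + (j : ZMod (2 * n)))
        = (∑ j ∈ Finset.range (2 * n - 1), Z (k + ((j + 1 : ℕ) : ZMod (2 * n))))
          + Z (k + ((0 : ℕ) : ZMod (2 * n))) :=
      Finset.sum_range_succ' _ _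
    rw [show (2 * n - 1) + 1 = 2 * n by omega] at h2
    have h3 : ∑ j ∈ Finset.range (2 * n - 1), Z (k + ((j + 1 : ℕ) : ZMod (2 * n)))
        = ∑ j ∈ Finset.range (2 * n - 1), Z (k + 1 + (j : ZMod (2 * n))) := by
      apply Finset.sum_congr rfl
      intro j _
      congr 1
      push_cast
      ring
    simp only [Nat.cast_zero, add_zero] at h2
    rw [h2, h3] at h1
    linarith
  -- helper product rewrites
  have hu_eq : ∀ (c : ZMod (2 * n)) (j : ℕ),
      a c * ∏ i ∈ Finset.range j, a (c + 1 + (i : ZMod (2 * n)))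
        = ∏ i ∈ Finset.range (j + 1), a (c + (i : ZMod (2 * n))) := by
    intro c j
    rw [Finset.prod_range_succ' (fun i => a (c + (i : ZMod (2 * n)))) j]
    have : ∀ i ∈ Finset.range j,
        a (c + ((i + 1 : ℕ) : ZMod (2 * n))) = a (c + 1 + (i : ZMod (2 * n))) := by
      intro i _; congr 1; push_cast; ring
    rw [Finset.prod_congr rfl this]
    simp only [Nat.cast_zero, add_zero]
    ring
  have hv_eq : ∀ (c : ZMod (2 * n)) (j : ℕ),
      a c * ∏ i ∈ Finset.range j, a (c - 1 - (i : ZMod (2 * n)))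
        = ∏ i ∈ Finset.range (j + 1), a (c - (i : ZMod (2 * n))) := by
    intro c j
    rw [Finset.prod_range_succ' (fun i => a (c - (i : ZMod (2 * n)))) j]
    have : ∀ i ∈ Finset.range j,
        a (c - ((i + 1 : ℕ) : ZMod (2 * n))) = a (c - 1 - (i : ZMod (2 * n))) := by
      intro i _; congr 1; push_cast; ring
    rw [Finset.prod_congr rfl this]
    simp only [Nat.cast_zero, sub_zero]
    ring
  -- the key pairing: complementary arc products multiply to q
  have huv : ∀ (k : ZMod (2 * n)) (j : ℕ), j < 2 * n - 1 →
      (∏ i ∈ Finset.range (j + 1), a (k + 1 + (i : ZMod (2 * n))))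
        * (∏ i ∈ Finset.range (2 * n - 1 - j), a (k - (i : ZMod (2 * n)))) = q := by
    intro k j hj
    have h2 : ∏ i ∈ Finset.range (2 * n - 1 - j), a (k - (i : ZMod (2 * n)))
        = ∏ i ∈ Finset.range (2 * n - 1 - j), a (k + 1 + ((j + 1 + i : ℕ) : ZMod (2 * n))) := by
      calc ∏ i ∈ Finset.range (2 * n - 1 - j), a (k - (i : ZMod (2 * n)))
          = ∏ i ∈ Finset.range (2 * n - 1 - j),
              a (k - ((2 * n - 1 - j - 1 - i : ℕ) : ZMod (2 * n))) :=
            (Finset.prod_range_reflect (fun i => a (k - (i : ZMod (2 * n)))) (2 * n - 1 - j)).symm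
        _ = _ := by
            apply Finset.prod_congr rfl
            intro i hi
            have hi' := Finset.mem_range.1 hi
            congr 1
            have hnat : (2 * n - 1 - j - 1 - i) + (j + 1 + i) + 1 = 2 * n := by omega
            have hc := congrArg (fun m : ℕ => (m : ZMod (2 * n))) hnat
            simp only [Nat.cast_add, Nat.cast_one, ZMod.natCast_self] at hc
            push_cast
            push_cast at hc
            linear_combination -hc
    have h3 := Finset.prod_range_add (fun i => a (k + 1 + (i : ZMod (2 * n)))) (j + 1)
      (2 * n - 1 - j)
    rw [show (j + 1) + (2 * n - 1 - j) = 2 * n by omega] at h3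
    rw [h2, ← h3, hqplus (k + 1)]
  -- bounds on the arc products
  have hprod_pos : ∀ (c : ZMod (2 * n)) (s : Finset ℕ) (f : ℕ → ZMod (2 * n)),
      0 < ∏ i ∈ s, a (f i) := by
    intro c s f
    exact Finset.prod_pos (fun i _ => hapos _)
  have hprod_le_one : ∀ (s : Finset ℕ) (f : ℕ → ZMod (2 * n)),
      ∏ i ∈ s, a (f i) ≤ 1 := by
    intro s f
    exact Finset.prod_le_one (fun i _ => (hapos _).le) (fun i _ => hale _)
  -- master identity
  have master : ∀ k : ZMod (2 * n), (1 - q) * Y (ω k)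
      = 2 * (q * Z k) + ∑ j ∈ Finset.range (2 * n - 1),
          (a (k + 1) * (∏ i ∈ Finset.range j, a (k + 1 + 1 + (i : ZMod (2 * n))))
            + a k * (∏ i ∈ Finset.range (2 * n - 1 - (j + 1)), a (k - 1 - (i : ZMod (2 * n)))))
            * Z (k + 1 + (j : ZMod (2 * n))) := by
    intro k
    have eY : Y (ω k) = a (k + 1) * X (k + 1) + a k * Xb k := by
      have e := eqY (ω k)
      rw [hω k] at e
      rw [ha]
      exact e
    have e1 := hXun (k + 1)
    have e2 := hXbun k
    have comb : (1 - q) * Y (ω k)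
        = (∑ j ∈ Finset.range (2 * n), a (k + 1)
            * ((∏ i ∈ Finset.range j, a (k + 1 + 1 + (i : ZMod (2 * n))))
              * Z (k + 1 + (j : ZMod (2 * n)))))
          + (∑ j ∈ Finset.range (2 * n), a k
            * ((∏ i ∈ Finset.range j, a (k - 1 - (i : ZMod (2 * n))))
              * Z (k - 1 - (j : ZMod (2 * n))))) := by
      rw [← Finset.mul_sum, ← Finset.mul_sum, ← e1, ← e2, eY]; ring
    -- reflect the backwards sum
    have refl : (∑ j ∈ Finset.range (2 * n), a k
            * ((∏ i ∈ Finset.range j, a (k - 1 - (i : ZMod (2 * n))))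
              * Z (k - 1 - (j : ZMod (2 * n)))))
        = ∑ j ∈ Finset.range (2 * n), a k
            * ((∏ i ∈ Finset.range (2 * n - 1 - j), a (k - 1 - (i : ZMod (2 * n))))
              * Z (k + (j : ZMod (2 * n)))) := by
      rw [← Finset.sum_range_reflect (fun j => a k
            * ((∏ i ∈ Finset.range (2 * n - 1 - j), a (k - 1 - (i : ZMod (2 * n))))
              * Z (k + (j : ZMod (2 * n))))) (2 * n)]
      apply Finset.sum_congr rfl
      intro j hj
      have hj' := Finset.mem_range.1 hj
      rw [show 2 * n - 1 - (2 * n - 1 - j) = j by omega]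
      congr 2
      congr 1
      have hnat : j + (2 * n - 1 - j) + 1 = 2 * n := by omega
      have hc := congrArg (fun m : ℕ => (m : ZMod (2 * n))) hnat
      simp only [Nat.cast_add, Nat.cast_one, ZMod.natCast_self] at hc
      linear_combination -hc
    -- peel the wrap-around term from the forward sum
    have peel1 : (∑ j ∈ Finset.range (2 * n), a (k + 1)
            * ((∏ i ∈ Finset.range j, a (k + 1 + 1 + (i : ZMod (2 * n))))
              * Z (k + 1 + (j : ZMod (2 * n)))))
        = (∑ j ∈ Finset.range (2 * n - 1), a (k + 1)
            * ((∏ i ∈ Finset.range j, a (k + 1 + 1 + (i : ZMod (2 * n))))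
              * Z (k + 1 + (j : ZMod (2 * n))))) + q * Z k := by
      have hs := Finset.sum_range_succ (fun j => a (k + 1)
            * ((∏ i ∈ Finset.range j, a (k + 1 + 1 + (i : ZMod (2 * n))))
              * Z (k + 1 + (j : ZMod (2 * n))))) (2 * n - 1)
      rw [show (2 * n - 1) + 1 = 2 * n by omega] at hs
      rw [hs]
      congr 1
      have hZk : Z (k + 1 + ((2 * n - 1 : ℕ) : ZMod (2 * n))) = Z k := by
        congr 1
        have hnat : (2 * n - 1) + 1 = 2 * n := by omega
        have hc := congrArg (fun m : ℕ => (m : ZMod (2 * n))) hnat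
        simp only [Nat.cast_add, Nat.cast_one, ZMod.natCast_self] at hc
        linear_combination hc
      have hcoef : a (k + 1) * (∏ i ∈ Finset.range (2 * n - 1),
          a (k + 1 + 1 + (i : ZMod (2 * n)))) = q := by
        have := hu_eq (k + 1) (2 * n - 1)
        rw [show (2 * n - 1) + 1 = 2 * n by omega] at this
        rw [this, hqplus (k + 1)]
      rw [hZk, ← mul_assoc, hcoef]
    -- peel the wrap-around term from the reflected backwards sum
    have peel2 : (∑ j ∈ Finset.range (2 * n), a k
            * ((∏ i ∈ Finset.range (2 * n - 1 - j), a (k - 1 - (i : ZMod (2 * n))))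
              * Z (k + (j : ZMod (2 * n)))))
        = (∑ j ∈ Finset.range (2 * n - 1), a k
            * ((∏ i ∈ Finset.range (2 * n - 1 - (j + 1)), a (k - 1 - (i : ZMod (2 * n))))
              * Z (k + 1 + (j : ZMod (2 * n))))) + q * Z k := by
      have hs := Finset.sum_range_succ' (fun j => a k
            * ((∏ i ∈ Finset.range (2 * n - 1 - j), a (k - 1 - (i : ZMod (2 * n))))
              * Z (k + (j : ZMod (2 * n))))) (2 * n - 1)
      rw [show (2 * n - 1) + 1 = 2 * n by omega] at hs
      rw [hs]
      congr 1
      · apply Finset.sum_congr rfl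
        intro j _
        congr 2
        congr 1
        push_cast
        ring
      · simp only [Nat.cast_zero, add_zero, Nat.sub_zero]
        have hcoef : a k * (∏ i ∈ Finset.range (2 * n - 1),
            a (k - 1 - (i : ZMod (2 * n)))) = q := by
          have := hv_eq k (2 * n - 1)
          rw [show (2 * n - 1) + 1 = 2 * n by omega] at this
          rw [this, hqminus k]
        rw [← mul_assoc, hcoef]
    have merge : ∑ j ∈ Finset.range (2 * n - 1),
          (a (k + 1) * (∏ i ∈ Finset.range j, a (k + 1 + 1 + (i : ZMod (2 * n))))
            + a k * (∏ i ∈ Finset.range (2 * n - 1 - (j + 1)), a (k - 1 - (i : ZMod (2 * n)))))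
            * Z (k + 1 + (j : ZMod (2 * n)))
        = (∑ j ∈ Finset.range (2 * n - 1), a (k + 1)
            * ((∏ i ∈ Finset.range j, a (k + 1 + 1 + (i : ZMod (2 * n))))
              * Z (k + 1 + (j : ZMod (2 * n)))))
          + (∑ j ∈ Finset.range (2 * n - 1), a k
            * ((∏ i ∈ Finset.range (2 * n - 1 - (j + 1)), a (k - 1 - (i : ZMod (2 * n))))
              * Z (k + 1 + (j : ZMod (2 * n))))) := by
      rw [← Finset.sum_add_distrib]
      apply Finset.sum_congr rfl
      intro j _
      ring
    rw [comb, refl, peel1, peel2, merge]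
    ring
  -- coefficient bounds
  have hcoef_bounds : ∀ (k : ZMod (2 * n)) (j : ℕ), j < 2 * n - 1 →
      2 * r ≤ (a (k + 1) * (∏ i ∈ Finset.range j, a (k + 1 + 1 + (i : ZMod (2 * n))))
            + a k * (∏ i ∈ Finset.range (2 * n - 1 - (j + 1)), a (k - 1 - (i : ZMod (2 * n)))))
        ∧ (a (k + 1) * (∏ i ∈ Finset.range j, a (k + 1 + 1 + (i : ZMod (2 * n))))
            + a k * (∏ i ∈ Finset.range (2 * n - 1 - (j + 1)),
                a (k - 1 - (i : ZMod (2 * n))))) ≤ 1 + q := by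
    intro k j hj
    have hU := hu_eq (k + 1) j
    have hV := hv_eq k (2 * n - 1 - (j + 1))
    rw [show (2 * n - 1 - (j + 1)) + 1 = 2 * n - 1 - j by omega] at hV
    rw [hU, hV]
    set U := ∏ i ∈ Finset.range (j + 1), a (k + 1 + (i : ZMod (2 * n))) with hUd
    set V := ∏ i ∈ Finset.range (2 * n - 1 - j), a (k - (i : ZMod (2 * n))) with hVd
    have hUV : U * V = q := huv k j hj
    have hU0 : 0 < U := Finset.prod_pos (fun i _ => hapos _)
    have hV0 : 0 < V := Finset.prod_pos (fun i _ => hapos _)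
    have hU1 : U ≤ 1 := Finset.prod_le_one (fun i _ => (hapos _).le) (fun i _ => hale _)
    have hV1 : V ≤ 1 := Finset.prod_le_one (fun i _ => (hapos _).le) (fun i _ => hale _)
    constructor
    · nlinarith [sq_nonneg (U - r)]
    · nlinarith
  -- master inequalities
  have master_up : ∀ k : ZMod (2 * n),
      (1 - q) * Y (ω k) ≤ 2 * (q * Z k) + (1 + q) * (T - Z k) := by
    intro k
    rw [master k]
    have hb1 : ∑ j ∈ Finset.range (2 * n - 1),
          (a (k + 1) * (∏ i ∈ Finset.range j, a (k + 1 + 1 + (i : ZMod (2 * n))))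
            + a k * (∏ i ∈ Finset.range (2 * n - 1 - (j + 1)), a (k - 1 - (i : ZMod (2 * n)))))
            * Z (k + 1 + (j : ZMod (2 * n)))
        ≤ ∑ j ∈ Finset.range (2 * n - 1), (1 + q) * Z (k + 1 + (j : ZMod (2 * n))) := by
      apply Finset.sum_le_sum
      intro j hj
      exact mul_le_mul_of_nonneg_right
        (hcoef_bounds k j (Finset.mem_range.1 hj)).2 (hZpos _).le
    have hb2 : ∑ j ∈ Finset.range (2 * n - 1), (1 + q) * Z (k + 1 + (j : ZMod (2 * n)))
        = (1 + q) * (T - Z k) := by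
      rw [← Finset.mul_sum, hTsub k]
    linarith
  have master_lo : ∀ k : ZMod (2 * n),
      2 * (q * Z k) + 2 * r * (T - Z k) ≤ (1 - q) * Y (ω k) := by
    intro k
    rw [master k]
    have hb1 : ∑ j ∈ Finset.range (2 * n - 1), 2 * r * Z (k + 1 + (j : ZMod (2 * n)))
        ≤ ∑ j ∈ Finset.range (2 * n - 1),
          (a (k + 1) * (∏ i ∈ Finset.range j, a (k + 1 + 1 + (i : ZMod (2 * n))))
            + a k * (∏ i ∈ Finset.range (2 * n - 1 - (j + 1)), a (k - 1 - (i : ZMod (2 * n)))))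
            * Z (k + 1 + (j : ZMod (2 * n))) := by
      apply Finset.sum_le_sum
      intro j hj
      exact mul_le_mul_of_nonneg_right
        (hcoef_bounds k j (Finset.mem_range.1 hj)).1 (hZpos _).le
    have hb2 : ∑ j ∈ Finset.range (2 * n - 1), 2 * r * Z (k + 1 + (j : ZMod (2 * n)))
        = 2 * r * (T - Z k) := by
      rw [← Finset.mul_sum, hTsub k]
    linarith
  -- sums over the involution
  have hsumω : ∀ f : ZMod (2 * n) → ℝ, ∑ z, f (ω z) = ∑ z, f z := by
    intro f
    exact Fintype.sum_bijective ω (Function.Involutive.bijective hω) _ _ (fun z => rfl)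
  -- rewrite the goal sum
  have hterm : ∀ k : ZMod (2 * n), 1 / (1 + Real.exp (h * ℓ' k)) = b k / (1 + b k) := by
    intro k
    simp only [hb]
    rw [show -h * ℓ' k = -(h * ℓ' k) by ring, Real.exp_neg]
    have he : 0 < Real.exp (h * ℓ' k) := Real.exp_pos _
    rw [div_eq_div_iff (by positivity) (by positivity)]
    field_simp
    ring
  have hgoalsum : (∑ k, 1 / (1 + Real.exp (h * ℓ' k)))
      = ∑ k : ZMod (2 * n), b k / (1 + b k) :=
    Finset.sum_congr rfl (fun k _ => hterm k)
  rw [hgoalsum]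
  set t := ∑ k : ZMod (2 * n), b k / (1 + b k) with htdef
  -- hyperbolic function values
  have hrx : Real.exp (-(h * Λv / 2)) = r := by rw [hrdef]; congr 1; ring
  have hxr : Real.exp (h * Λv / 2) * r = 1 := by
    rw [hrdef, ← Real.exp_add, show h * Λv / 2 + -(h * Λv) / 2 = 0 by ring, Real.exp_zero]
  have htanh : Real.tanh (h * Λv / 2) = (1 - q) / (1 + q) := by
    rw [Real.tanh_eq_sinh_div_cosh, Real.sinh_eq, Real.cosh_eq, hrx]
    have hE := Real.exp_pos (h * Λv / 2)
    rw [div_eq_div_iff (by linarith) (by linarith)]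
    linear_combination Real.exp (h * Λv / 2) * hq_rr + r * hxr
  have hsinh : Real.sinh (h * Λv / 2) = (1 - q) / (2 * r) := by
    rw [Real.sinh_eq, hrx]
    rw [div_eq_div_iff (by norm_num) (by linarith)]
    linear_combination 2 * hxr + 2 * hq_rr
  -- THE LOWER BOUND
  have key1 : ∀ k : ZMod (2 * n), (1 - q) * (Y (ω k) + Z k) ≤ (1 + q) * T := by
    intro k
    have := master_up k
    linarith [this]
  have key2 : ∀ k : ZMod (2 * n),
      (1 - q) * (Z k + Z (ω k)) ≤ (2 * ((1 + q) * T)) * (b k / (1 + b k)) := by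
    intro k
    have h1 := key1 k
    have h2 := key1 (ω k)
    rw [hω k] at h2
    have hZk : Z k = b k * Y k := hZb k
    have hZωk : Z (ω k) = b k * Y (ω k) := by rw [hZb (ω k), hbω k]
    rw [hZk] at h1
    rw [hZωk] at h2
    have hb0 := hbpos k
    have hb1' : (0:ℝ) < 1 + b k := by linarith
    have hmain : (1 - q) * ((1 + b k) * (Y k + Y (ω k))) ≤ 2 * ((1 + q) * T) := by
      linarith [h1, h2]
    have heq : (1 - q) * (Z k + Z (ω k))
        = ((1 - q) * ((1 + b k) * (Y k + Y (ω k)))) * (b k / (1 + b k)) := by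
      rw [hZk, hZωk]
      field_simp
    rw [heq]
    exact mul_le_mul_of_nonneg_right hmain (by positivity)
  have hsum2 : (1 - q) * (2 * T) ≤ (2 * ((1 + q) * T)) * t := by
    have hs := Finset.sum_le_sum (fun k (_ : k ∈ Finset.univ) => key2 k)
    have hL1 : ∑ k : ZMod (2 * n), (1 - q) * (Z k + Z (ω k)) = (1 - q) * (2 * T) := by
      rw [← Finset.mul_sum, Finset.sum_add_distrib, hsumω Z]
      rw [← hT]; ring
    have hR1 : ∑ k : ZMod (2 * n), (2 * ((1 + q) * T)) * (b k / (1 + b k))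
        = (2 * ((1 + q) * T)) * t := by
      rw [← Finset.mul_sum, htdef]
    rw [hL1, hR1] at hs
    exact hs
  have hlow : (1 - q) / (1 + q) ≤ t := by
    have h2T : (0:ℝ) < 2 * T := by linarith
    have hstep : (1 - q) * (2 * T) ≤ ((1 + q) * t) * (2 * T) := by linarith [hsum2]
    have hstep2 : 1 - q ≤ (1 + q) * t := le_of_mul_le_mul_right hstep h2T
    rw [div_le_iff₀ (by linarith)]
    linarith
  have htpos : 0 < t := by
    have : (0:ℝ) < (1 - q) / (1 + q) := by
      apply div_pos <;> linarith
    linarith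
  have h1rt : 1 - r ≤ t := by
    have hp : (0:ℝ) ≤ (1 - r) * r * (1 - r) :=
      mul_nonneg (mul_nonneg (by linarith) hr0.le) (by linarith)
    have : (1 - r) * (1 + q) ≤ 1 - q := by rw [hq_rr]; linarith [hp]
    have h2 : 1 - r ≤ (1 - q) / (1 + q) := by
      rw [le_div_iff₀ (by linarith)]
      linarith
    linarith
  constructor
  · rw [htanh]; exact hlow
  -- THE UPPER BOUND
  · rw [hsinh]
    by_contra hcon
    push_neg at hcon
    -- hcon : (1 - q) / (2 * r) < t
    have hs2rt : 1 - q < 2 * r * t := by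
      rw [div_lt_iff₀ (by linarith)] at hcon
      linarith
    have key3 : ∀ k : ZMod (2 * n),
        2 * r * T ≤ (1 - q) * Y (ω k) + 2 * r * (1 - r) * Z k := by
      intro k
      have e := master_lo k
      rw [hq_rr] at e ⊢
      linarith
    have key4 : ∀ k : ZMod (2 * n),
        4 * r * T * (b k / ((1 - q) + 2 * r * (1 - r) * b k)) ≤ Z k + Z (ω k) := by
      intro k
      have h1 := key3 k
      have h2 := key3 (ω k)
      rw [hω k] at h2
      have hZk : Z k = b k * Y k := hZb k
      have hZωk : Z (ω k) = b k * Y (ω k) := by rw [hZb (ω k), hbω k]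
      rw [hZk] at h1
      rw [hZωk] at h2
      have hb0 := hbpos k
      have hD : (0:ℝ) < (1 - q) + 2 * r * (1 - r) * b k := by
        have h1r : (0:ℝ) < 1 - r := by linarith
        have : (0:ℝ) < 2 * r * (1 - r) * b k :=
          mul_pos (mul_pos (mul_pos (by norm_num) hr0) h1r) hb0
        linarith
      have hS : 4 * r * T ≤ (Y k + Y (ω k)) * ((1 - q) + 2 * r * (1 - r) * b k) := by
        linarith [h1, h2]
      have h5 : 4 * r * T / ((1 - q) + 2 * r * (1 - r) * b k) ≤ Y k + Y (ω k) :=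
        (div_le_iff₀ hD).mpr hS
      calc 4 * r * T * (b k / ((1 - q) + 2 * r * (1 - r) * b k))
          = (4 * r * T / ((1 - q) + 2 * r * (1 - r) * b k)) * b k := by ring
        _ ≤ (Y k + Y (ω k)) * b k := mul_le_mul_of_nonneg_right h5 hb0.le
        _ = Z k + Z (ω k) := by rw [hZk, hZωk]; ring
    have hsum4 : 4 * r * T
        * (∑ k : ZMod (2 * n), b k / ((1 - q) + 2 * r * (1 - r) * b k)) ≤ 2 * T := by
      have hs := Finset.sum_le_sum (fun k (_ : k ∈ Finset.univ) => key4 k)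
      have hL1 : ∑ k : ZMod (2 * n),
          4 * r * T * (b k / ((1 - q) + 2 * r * (1 - r) * b k))
          = 4 * r * T * (∑ k : ZMod (2 * n), b k / ((1 - q) + 2 * r * (1 - r) * b k)) := by
        rw [← Finset.mul_sum]
      have hR1 : ∑ k : ZMod (2 * n), (Z k + Z (ω k)) = 2 * T := by
        rw [Finset.sum_add_distrib, hsumω Z, ← hT]; ring
      rw [hL1, hR1] at hs
      exact hs
    -- termwise strict comparison
    have hterm2 : ∀ k : ZMod (2 * n),
        b k / (t * (1 + b k)) < 2 * r * (b k / ((1 - q) + 2 * r * (1 - r) * b k)) := by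
      intro k
      have hb0 := hbpos k
      have hb1' : (0:ℝ) < 1 + b k := by linarith
      have hD : (0:ℝ) < (1 - q) + 2 * r * (1 - r) * b k := by
        have h1r : (0:ℝ) < 1 - r := by linarith
        have : (0:ℝ) < 2 * r * (1 - r) * b k :=
          mul_pos (mul_pos (mul_pos (by norm_num) hr0) h1r) hb0
        linarith
      have hDlt : (1 - q) + 2 * r * (1 - r) * b k < 2 * r * t * (1 + b k) := by
        have e1 : 2 * r * (1 - r) * b k ≤ 2 * r * t * b k := by
          have : (0:ℝ) ≤ (t - (1 - r)) * (2 * r * b k) := by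
            apply mul_nonneg
            · linarith
            · positivity
          linarith [this]
        linarith [hs2rt, e1]
      rw [div_lt_iff₀ (by positivity)]
      rw [show 2 * r * (b k / ((1 - q) + 2 * r * (1 - r) * b k)) * (t * (1 + b k))
          = (2 * r * t * (1 + b k)) * (b k / ((1 - q) + 2 * r * (1 - r) * b k)) by ring]
      calc b k = ((1 - q) + 2 * r * (1 - r) * b k)
            * (b k / ((1 - q) + 2 * r * (1 - r) * b k)) := by
            rw [mul_div_cancel₀ _ hD.ne']
        _ < (2 * r * t * (1 + b k)) * (b k / ((1 - q) + 2 * r * (1 - r) * b k)) := by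
            apply mul_lt_mul_of_pos_right hDlt
            positivity
    have hstrict : ∑ k : ZMod (2 * n), b k / (t * (1 + b k))
        < ∑ k : ZMod (2 * n), 2 * r * (b k / ((1 - q) + 2 * r * (1 - r) * b k)) :=
      Finset.sum_lt_sum_of_nonempty Finset.univ_nonempty (fun k _ => hterm2 k)
    have hone : ∑ k : ZMod (2 * n), b k / (t * (1 + b k)) = 1 := by
      have : ∀ k : ZMod (2 * n), b k / (t * (1 + b k)) = (b k / (1 + b k)) / t := by
        intro k
        rw [div_div]
        ring_nf
      rw [Finset.sum_congr rfl (fun k _ => this k), ← Finset.sum_div, ← htdef,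
        div_self htpos.ne']
    have hle1 : ∑ k : ZMod (2 * n), 2 * r * (b k / ((1 - q) + 2 * r * (1 - r) * b k)) ≤ 1 := by
      have : ∑ k : ZMod (2 * n), 2 * r * (b k / ((1 - q) + 2 * r * (1 - r) * b k))
          = 2 * r * (∑ k : ZMod (2 * n), b k / ((1 - q) + 2 * r * (1 - r) * b k)) := by
        rw [← Finset.mul_sum]
      have h2T : (0:ℝ) < 2 * T := by linarith
      have hstep : (2 * r * (∑ k : ZMod (2 * n), b k / ((1 - q) + 2 * r * (1 - r) * b k)))
          * (2 * T) ≤ 1 * (2 * T) := by linarith [hsum4]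
      rw [this]
      exact le_of_mul_le_mul_right hstep h2T
    linarith [hstrict, hone, hle1]
end

section
/- Under Lim's system hypotheses (see context), the Y-variables satisfy the closed equation: for every k ∈ ZMod(2n), Y_{ω(k)} = (1/sinh(h·Λ/2)) · ( Σ_{i ∈ ZMod(2n), i ≠ k} exp(−h·ℓ'_i)·cosh(h·(S(k,i) − Λ/2))·Y_i + exp(−h·ℓ'_k)·exp(−h·Λ/2)·Y_k ), where for i ≠ k the cyclic partial sum S(k,i) := Σ_{t=1}^{d} L_{k+t}, with d the unique integer in {1, …, 2n−1} such that i = k + d in ZMod(2n). -/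
open Finset

private lemma sum_cast_range' {N : ℕ} [NeZero N] (F : ZMod N → ℝ) :
    ∑ t ∈ Finset.range N, F (t : ZMod N) = ∑ j, F j :=
  Finset.sum_nbij' (fun t => ((t : ℕ) : ZMod N)) (fun j => j.val)
    (fun a _ => Finset.mem_univ _)
    (fun a _ => Finset.mem_range.2 (ZMod.val_lt a))
    (fun a ha => ZMod.val_cast_of_lt (Finset.mem_range.1 ha))
    (fun a _ => ZMod.natCast_rightInverse a)
    (fun a _ => rfl)

private lemma sum_full_period' {N : ℕ} [NeZero N] (G : ZMod N → ℝ) (c : ZMod N) :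
    ∑ t ∈ Finset.Icc 1 N, G (c + (t : ZMod N)) = ∑ j, G j := by
  have h1 : ∑ t ∈ Finset.Icc 1 N, G (c + (t : ZMod N))
      = ∑ i ∈ Finset.range N, G (c + ((1 + i : ℕ) : ZMod N)) := by
    rw [← Finset.Ico_add_one_right_eq_Icc, Finset.sum_Ico_eq_sum_range]; norm_num
  rw [h1]
  calc ∑ i ∈ Finset.range N, G (c + ((1 + i : ℕ) : ZMod N))
      = ∑ i ∈ Finset.range N, G ((c + 1) + (i : ZMod N)) := by
        refine Finset.sum_congr rfl fun i _ => ?_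
        congr 1; push_cast; ring
    _ = ∑ j, G ((c + 1) + j) := sum_cast_range' (fun j => G ((c + 1) + j))
    _ = ∑ j, G j := Equiv.sum_comp (Equiv.addLeft (c + 1)) G

private lemma sum_full_period_bwd' {N : ℕ} [NeZero N] (G : ZMod N → ℝ) (c : ZMod N) :
    ∑ t ∈ Finset.Icc 1 N, G (c - (t : ZMod N)) = ∑ j, G j := by
  have h1 : ∑ t ∈ Finset.Icc 1 N, G (c - (t : ZMod N))
      = ∑ i ∈ Finset.range N, G (c - ((1 + i : ℕ) : ZMod N)) := by
    rw [← Finset.Ico_add_one_right_eq_Icc, Finset.sum_Ico_eq_sum_range]; norm_num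
  rw [h1]
  calc ∑ i ∈ Finset.range N, G (c - ((1 + i : ℕ) : ZMod N))
      = ∑ i ∈ Finset.range N, G ((c - 1) - (i : ZMod N)) := by
        refine Finset.sum_congr rfl fun i _ => ?_
        congr 1; push_cast; ring
    _ = ∑ j, G ((c - 1) - j) := sum_cast_range' (fun j => G ((c - 1) - j))
    _ = ∑ j, G j := Equiv.sum_comp (Equiv.subLeft (c - 1)) G

private lemma telescX' {N : ℕ} [NeZero N] (h : ℝ) (L ℓ' X Y : ZMod N → ℝ)
    (eqX : ∀ k, X k = Real.exp (-h * L (k + 1)) * X (k + 1)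
      + Real.exp (-h * ℓ' k) * Y k)
    (k : ZMod N) (m : ℕ) :
    X k = Real.exp (-h * ∑ t ∈ Finset.Icc 1 m, L (k + (t : ZMod N))) * X (k + (m : ZMod N))
      + ∑ d ∈ Finset.range m, Real.exp (-h * ∑ t ∈ Finset.Icc 1 d, L (k + (t : ZMod N)))
          * (Real.exp (-h * ℓ' (k + (d : ZMod N))) * Y (k + (d : ZMod N))) := by
  induction m with
  | zero => simp
  | succ m ih =>
    have hc : ((m + 1 : ℕ) : ZMod N) = (m : ZMod N) + 1 := by push_cast; ring
    rw [Finset.sum_Icc_succ_top (Nat.le_add_left 1 m), Finset.sum_range_succ, hc,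
      ← add_assoc k ((m : ZMod N)) 1, mul_add (-h), Real.exp_add, ih,
      eqX (k + (m : ZMod N))]
    ring

private lemma telescXb' {N : ℕ} [NeZero N] (h : ℝ) (L ℓ' Xb Y : ZMod N → ℝ)
    (eqXb : ∀ k, Xb k = Real.exp (-h * L (k - 1)) * Xb (k - 1)
      + Real.exp (-h * ℓ' (k - 1)) * Y (k - 1))
    (k : ZMod N) (m : ℕ) :
    Xb k = Real.exp (-h * ∑ t ∈ Finset.Icc 1 m, L (k - (t : ZMod N))) * Xb (k - (m : ZMod N))
      + ∑ d ∈ Finset.range m, Real.exp (-h * ∑ t ∈ Finset.Icc 1 d, L (k - (t : ZMod N)))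
          * (Real.exp (-h * ℓ' (k - ((d + 1 : ℕ) : ZMod N)))
              * Y (k - ((d + 1 : ℕ) : ZMod N))) := by
  induction m with
  | zero => simp
  | succ m ih =>
    have hc : ((m + 1 : ℕ) : ZMod N) = (m : ZMod N) + 1 := by push_cast; ring
    rw [Finset.sum_Icc_succ_top (Nat.le_add_left 1 m), Finset.sum_range_succ, hc,
      ← sub_sub k ((m : ZMod N)) 1, mul_add (-h), Real.exp_add, ih,
      eqXb (k - (m : ZMod N))]
    ring

private lemma sum_compl' {N : ℕ} [NeZero N] (G : ZMod N → ℝ) (c : ZMod N) {d : ℕ}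
    (hd1 : 1 ≤ d) (hd2 : d ≤ N) :
    ∑ t ∈ Finset.Icc 1 d, G (c + 1 - (t : ZMod N))
      = (∑ j, G j) - ∑ t ∈ Finset.Icc 1 (N - d), G (c + (t : ZMod N)) := by
  have key : ∑ t ∈ Finset.Icc 1 d, G (c + 1 - (t : ZMod N))
      = ∑ s ∈ Finset.Icc (N - d + 1) N, G (c + (s : ZMod N)) := by
    refine Finset.sum_nbij' (i := fun t => N + 1 - t) (j := fun s => N + 1 - s) ?_ ?_ ?_ ?_ ?_
    · intro a ha
      simp only [Finset.mem_Icc] at ha ⊢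
      omega
    · intro a ha
      simp only [Finset.mem_Icc] at ha ⊢
      omega
    · intro a ha
      beta_reduce
      simp only [Finset.mem_Icc] at ha
      omega
    · intro a ha
      beta_reduce
      simp only [Finset.mem_Icc] at ha
      omega
    · intro a ha
      beta_reduce
      simp only [Finset.mem_Icc] at ha
      congr 1
      have hcast : ((N + 1 - a : ℕ) : ZMod N) = 1 - (a : ZMod N) := by
        rw [Nat.cast_sub (by omega)]
        push_cast
        rw [ZMod.natCast_self]
        ring
      rw [hcast]
      ring
  have hun : ∑ t ∈ Finset.Icc 1 (N - d), G (c + (t : ZMod N))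
      + ∑ s ∈ Finset.Icc (N - d + 1) N, G (c + (s : ZMod N))
      = ∑ t ∈ Finset.Icc 1 N, G (c + (t : ZMod N)) := by
    rw [← Finset.Ico_add_one_right_eq_Icc, ← Finset.Ico_add_one_right_eq_Icc, ← Finset.Ico_add_one_right_eq_Icc]
    rw [show N - d + 1 = (N - d) + 1 from rfl]
    exact Finset.sum_Ico_consecutive _ (by omega) (by omega)
  rw [key]
  rw [sum_full_period' G c] at hun
  linarith

/-- Closed equation satisfied by the Y-variables of Lim's system:
`Y_{ω(k)} = (1/sinh(hΛ/2)) (Σ_{i≠k} e^{-hℓ'ᵢ} cosh(h(S(k,i) − Λ/2)) Yᵢ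
  + e^{-hℓ'ₖ} e^{-hΛ/2} Yₖ)`, where `S(k,i) = Σ_{t=1}^{d} L_{k+t}` with
`d ∈ {1,…,2n−1}` the representative of `i − k`. -/
theorem Y_closed_equation_of_lim_system
    (n : ℕ) [NeZero n] (hn : 1 ≤ n) (h : ℝ) (hh : 0 < h)
    (L ℓ' X Xb Y : ZMod (2 * n) → ℝ)
    (ω : ZMod (2 * n) → ZMod (2 * n))
    (hL : ∀ k, 0 < L k)
    (hω : ∀ k, ω (ω k) = k) (hω' : ∀ k, ω k ≠ k)
    (hℓpos : ∀ k, 0 < ℓ' k) (hℓω : ∀ k, ℓ' (ω k) = ℓ' k)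
    (hX : ∀ k, 0 < X k) (hXb : ∀ k, 0 < Xb k) (hY : ∀ k, 0 < Y k)
    (eqY : ∀ k, Y k = Real.exp (-h * L (ω k + 1)) * X (ω k + 1)
        + Real.exp (-h * L (ω k)) * Xb (ω k))
    (eqX : ∀ k, X k = Real.exp (-h * L (k + 1)) * X (k + 1)
        + Real.exp (-h * ℓ' k) * Y k)
    (eqXb : ∀ k, Xb k = Real.exp (-h * L (k - 1)) * Xb (k - 1)
        + Real.exp (-h * ℓ' (k - 1)) * Y (k - 1)) :
    ∀ k : ZMod (2 * n),
      Y (ω k) = (1 / Real.sinh (h * (∑ j, L j) / 2)) *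
        ((∑ i ∈ Finset.univ.erase k,
            Real.exp (-h * ℓ' i) *
              Real.cosh (h * ((∑ t ∈ Finset.Icc 1 (i - k).val,
                  L (k + (t : ZMod (2 * n)))) - (∑ j, L j) / 2)) * Y i)
          + Real.exp (-h * ℓ' k) * Real.exp (-h * (∑ j, L j) / 2) * Y k) := by
  intro k
  have hN0 : 0 < 2 * n := by omega
  set Λ := ∑ j, L j with hΛ
  have hΛpos : 0 < Λ := Finset.sum_pos (fun j _ => hL j) Finset.univ_nonempty
  clear_value Λ
  -- forward telescoping around the full cycle
  have hXk := telescX' h L ℓ' X Y eqX k (2 * n)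
  rw [ZMod.natCast_self, add_zero, sum_full_period' L k, ← hΛ] at hXk
  have hfwd : (1 - Real.exp (-h * Λ)) * X k
      = ∑ d ∈ Finset.range (2 * n),
          Real.exp (-h * ∑ t ∈ Finset.Icc 1 d, L (k + (t : ZMod (2 * n))))
            * (Real.exp (-h * ℓ' (k + (d : ZMod (2 * n)))) * Y (k + (d : ZMod (2 * n)))) := by
    linarith
  have hsplitf : ∑ d ∈ Finset.range (2 * n),
        Real.exp (-h * ∑ t ∈ Finset.Icc 1 d, L (k + (t : ZMod (2 * n))))
          * (Real.exp (-h * ℓ' (k + (d : ZMod (2 * n)))) * Y (k + (d : ZMod (2 * n))))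
      = Real.exp (-h * ℓ' k) * Y k
        + ∑ d ∈ Finset.Ico 1 (2 * n),
            Real.exp (-h * ∑ t ∈ Finset.Icc 1 d, L (k + (t : ZMod (2 * n))))
              * (Real.exp (-h * ℓ' (k + (d : ZMod (2 * n)))) * Y (k + (d : ZMod (2 * n)))) := by
    rw [Finset.range_eq_Ico, Finset.sum_eq_sum_Ico_succ_bot hN0]
    simp
  rw [hsplitf] at hfwd
  have hX1 : (1 - Real.exp (-h * Λ)) * (Real.exp (-h * L (k + 1)) * X (k + 1))
      = (∑ d ∈ Finset.Ico 1 (2 * n),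
            Real.exp (-h * ∑ t ∈ Finset.Icc 1 d, L (k + (t : ZMod (2 * n))))
              * (Real.exp (-h * ℓ' (k + (d : ZMod (2 * n)))) * Y (k + (d : ZMod (2 * n)))))
        + Real.exp (-h * Λ) * (Real.exp (-h * ℓ' k) * Y k) := by
    linear_combination hfwd - (1 - Real.exp (-h * Λ)) * eqX k
  -- backward telescoping around the full cycle, starting at k+1
  have hXbk := telescXb' h L ℓ' Xb Y eqXb (k + 1) (2 * n)
  rw [ZMod.natCast_self, sub_zero, sum_full_period_bwd' L (k + 1), ← hΛ] at hXbk
  have hbwd : (1 - Real.exp (-h * Λ)) * Xb (k + 1)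
      = ∑ d ∈ Finset.range (2 * n),
          Real.exp (-h * ∑ t ∈ Finset.Icc 1 d, L (k + 1 - (t : ZMod (2 * n))))
            * (Real.exp (-h * ℓ' (k + 1 - ((d + 1 : ℕ) : ZMod (2 * n))))
                * Y (k + 1 - ((d + 1 : ℕ) : ZMod (2 * n)))) := by
    linarith
  have hsplitb : ∑ d ∈ Finset.range (2 * n),
        Real.exp (-h * ∑ t ∈ Finset.Icc 1 d, L (k + 1 - (t : ZMod (2 * n))))
          * (Real.exp (-h * ℓ' (k + 1 - ((d + 1 : ℕ) : ZMod (2 * n))))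
              * Y (k + 1 - ((d + 1 : ℕ) : ZMod (2 * n))))
      = Real.exp (-h * ℓ' k) * Y k
        + ∑ d ∈ Finset.Ico 1 (2 * n),
            Real.exp (-h * ∑ t ∈ Finset.Icc 1 d, L (k + 1 - (t : ZMod (2 * n))))
              * (Real.exp (-h * ℓ' (k + 1 - ((d + 1 : ℕ) : ZMod (2 * n))))
                  * Y (k + 1 - ((d + 1 : ℕ) : ZMod (2 * n)))) := by
    rw [Finset.range_eq_Ico, Finset.sum_eq_sum_Ico_succ_bot hN0]
    norm_num
  rw [hsplitb] at hbwd
  have eqXb1 : Xb (k + 1) = Real.exp (-h * L k) * Xb k + Real.exp (-h * ℓ' k) * Y k := by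
    have := eqXb (k + 1)
    rwa [add_sub_cancel_right] at this
  have hXb1 : (1 - Real.exp (-h * Λ)) * (Real.exp (-h * L k) * Xb k)
      = (∑ d ∈ Finset.Ico 1 (2 * n),
            Real.exp (-h * ∑ t ∈ Finset.Icc 1 d, L (k + 1 - (t : ZMod (2 * n))))
              * (Real.exp (-h * ℓ' (k + 1 - ((d + 1 : ℕ) : ZMod (2 * n))))
                  * Y (k + 1 - ((d + 1 : ℕ) : ZMod (2 * n)))))
        + Real.exp (-h * Λ) * (Real.exp (-h * ℓ' k) * Y k) := by
    linear_combination hbwd - (1 - Real.exp (-h * Λ)) * eqXb1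
  -- reindex the forward sum over i ≠ k
  have hre1 : (∑ d ∈ Finset.Ico 1 (2 * n),
        Real.exp (-h * ∑ t ∈ Finset.Icc 1 d, L (k + (t : ZMod (2 * n))))
          * (Real.exp (-h * ℓ' (k + (d : ZMod (2 * n)))) * Y (k + (d : ZMod (2 * n)))))
      = ∑ i ∈ Finset.univ.erase k,
          Real.exp (-h * ∑ t ∈ Finset.Icc 1 (i - k).val, L (k + (t : ZMod (2 * n))))
            * (Real.exp (-h * ℓ' i) * Y i) := by
    refine Finset.sum_nbij' (i := fun d => k + (d : ZMod (2 * n))) (j := fun i => (i - k).val) ?_ ?_ ?_ ?_ ?_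
    · intro d hd
      beta_reduce
      obtain ⟨hd1, hd2⟩ := Finset.mem_Ico.1 hd
      refine Finset.mem_erase.2 ⟨?_, Finset.mem_univ _⟩
      intro hcon
      have h1 : ((d : ZMod (2 * n))) = 0 := by
        have := add_left_cancel (a := k) (b := (d : ZMod (2 * n))) (c := 0)
        exact this (by rw [add_zero, hcon])
      have h2 : ((d : ZMod (2 * n))).val = d := ZMod.val_cast_of_lt hd2
      rw [h1, ZMod.val_zero] at h2
      omega
    · intro i hi
      beta_reduce
      have hik : i ≠ k := (Finset.mem_erase.1 hi).1
      refine Finset.mem_Ico.2 ⟨?_, ZMod.val_lt _⟩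
      have : i - k ≠ 0 := sub_ne_zero.2 hik
      have := (ZMod.val_eq_zero (i - k)).not.2 this
      omega
    · intro d hd
      beta_reduce
      obtain ⟨hd1, hd2⟩ := Finset.mem_Ico.1 hd
      rw [add_sub_cancel_left, ZMod.val_cast_of_lt hd2]
    · intro i hi
      beta_reduce
      rw [ZMod.natCast_rightInverse (i - k), add_sub_cancel]
    · intro d hd
      beta_reduce
      obtain ⟨hd1, hd2⟩ := Finset.mem_Ico.1 hd
      rw [add_sub_cancel_left, ZMod.val_cast_of_lt hd2]
  -- reindex the backward sum over i ≠ k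
  have hre2 : (∑ d ∈ Finset.Ico 1 (2 * n),
        Real.exp (-h * ∑ t ∈ Finset.Icc 1 d, L (k + 1 - (t : ZMod (2 * n))))
          * (Real.exp (-h * ℓ' (k + 1 - ((d + 1 : ℕ) : ZMod (2 * n))))
              * Y (k + 1 - ((d + 1 : ℕ) : ZMod (2 * n)))))
      = ∑ i ∈ Finset.univ.erase k,
          Real.exp (-(h * Λ - h * ∑ t ∈ Finset.Icc 1 (i - k).val, L (k + (t : ZMod (2 * n)))))
            * (Real.exp (-h * ℓ' i) * Y i) := by
    refine Finset.sum_nbij' (i := fun d => k - (d : ZMod (2 * n))) (j := fun i => (k - i).val) ?_ ?_ ?_ ?_ ?_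
    · intro d hd
      beta_reduce
      obtain ⟨hd1, hd2⟩ := Finset.mem_Ico.1 hd
      refine Finset.mem_erase.2 ⟨?_, Finset.mem_univ _⟩
      intro hcon
      have h1 : ((d : ZMod (2 * n))) = 0 := by
        have : k - (d : ZMod (2 * n)) - k = k - k := by rw [hcon]
        simpa using this.symm
      have h2 : ((d : ZMod (2 * n))).val = d := ZMod.val_cast_of_lt hd2
      rw [h1, ZMod.val_zero] at h2
      omega
    · intro i hi
      beta_reduce
      have hik : i ≠ k := (Finset.mem_erase.1 hi).1
      refine Finset.mem_Ico.2 ⟨?_, ZMod.val_lt _⟩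
      have : k - i ≠ 0 := sub_ne_zero.2 (Ne.symm hik)
      have := (ZMod.val_eq_zero (k - i)).not.2 this
      omega
    · intro d hd
      beta_reduce
      obtain ⟨hd1, hd2⟩ := Finset.mem_Ico.1 hd
      rw [sub_sub_cancel, ZMod.val_cast_of_lt hd2]
    · intro i hi
      beta_reduce
      rw [ZMod.natCast_rightInverse (k - i), sub_sub_cancel]
    · intro d hd
      beta_reduce
      obtain ⟨hd1, hd2⟩ := Finset.mem_Ico.1 hd
      have hdz : ((d : ZMod (2 * n))) ≠ 0 := by
        intro hcon
        have h2 : ((d : ZMod (2 * n))).val = d := ZMod.val_cast_of_lt hd2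
        rw [hcon, ZMod.val_zero] at h2
        omega
      have hval : ((k - (d : ZMod (2 * n))) - k).val = 2 * n - d := by
        rw [show k - (d : ZMod (2 * n)) - k = -(d : ZMod (2 * n)) by ring, ZMod.neg_val, if_neg hdz,
          ZMod.val_cast_of_lt hd2]
      have harg : (k + 1 - ((d + 1 : ℕ) : ZMod (2 * n))) = k - (d : ZMod (2 * n)) := by
        push_cast; ring
      rw [harg, hval, sum_compl' L k hd1 (le_of_lt hd2), ← hΛ]
      congr 2
      ring
  rw [hre1] at hX1
  rw [hre2] at hXb1
  -- the Y-equation at ω k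
  have eqYk : Y (ω k) = Real.exp (-h * L (k + 1)) * X (k + 1)
      + Real.exp (-h * L k) * Xb k := by
    have := eqY (ω k)
    rwa [hω k] at this
  -- hyperbolic identities
  have hcoshid : ∀ s : ℝ,
      Real.exp (-h * s) + Real.exp (-(h * Λ - h * s))
        = 2 * Real.exp (-h * Λ / 2) * Real.cosh (h * (s - Λ / 2)) := by
    intro s
    rw [Real.cosh_eq,
      show h * (s - Λ / 2) = h * s - h * Λ / 2 by ring,
      show -h * s = (-h * Λ / 2) + -(h * s - h * Λ / 2) by ring, Real.exp_add,
      show -(h * Λ - h * s) = (-h * Λ / 2) + (h * s - h * Λ / 2) by ring, Real.exp_add]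
    ring
  have hEE : Real.exp (-h * Λ / 2) * Real.exp (-h * Λ / 2) = Real.exp (-h * Λ) := by
    rw [← Real.exp_add]; congr 1; ring
  have hsinhid : 1 - Real.exp (-h * Λ) = 2 * Real.exp (-h * Λ / 2) * Real.sinh (h * Λ / 2) := by
    have e1 : Real.exp (-h * Λ / 2) * Real.exp (h * Λ / 2) = 1 := by
      rw [← Real.exp_add, show -h * Λ / 2 + h * Λ / 2 = 0 by ring, Real.exp_zero]
    rw [Real.sinh_eq]
    have e2 : Real.exp (-h * Λ / 2) * Real.exp (-(h * Λ / 2)) = Real.exp (-h * Λ) := by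
      rw [← Real.exp_add]; congr 1; ring
    linear_combination e2 - e1
  have hsinhpos : 0 < Real.sinh (h * Λ / 2) := Real.sinh_pos_iff.2 (by positivity)
  -- final combined equation
  have final : Real.sinh (h * Λ / 2) * Y (ω k)
      = (∑ i ∈ Finset.univ.erase k,
            Real.exp (-h * ℓ' i) *
              Real.cosh (h * ((∑ t ∈ Finset.Icc 1 (i - k).val,
                  L (k + (t : ZMod (2 * n)))) - Λ / 2)) * Y i)
          + Real.exp (-h * ℓ' k) * Real.exp (-h * Λ / 2) * Y k := by
    apply mul_left_cancel₀ (a := 2 * Real.exp (-h * Λ / 2)) (by positivity)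
    calc 2 * Real.exp (-h * Λ / 2) * (Real.sinh (h * Λ / 2) * Y (ω k))
        = (1 - Real.exp (-h * Λ)) * Y (ω k) := by rw [hsinhid]; ring
      _ = (∑ i ∈ Finset.univ.erase k,
            (Real.exp (-h * ∑ t ∈ Finset.Icc 1 (i - k).val, L (k + (t : ZMod (2 * n))))
              * (Real.exp (-h * ℓ' i) * Y i)
            + Real.exp (-(h * Λ - h * ∑ t ∈ Finset.Icc 1 (i - k).val, L (k + (t : ZMod (2 * n)))))
              * (Real.exp (-h * ℓ' i) * Y i)))
          + 2 * Real.exp (-h * Λ) * (Real.exp (-h * ℓ' k) * Y k) := by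
        rw [Finset.sum_add_distrib]
        linear_combination (1 - Real.exp (-h * Λ)) * eqYk + hX1 + hXb1
      _ = 2 * Real.exp (-h * Λ / 2) *
            ((∑ i ∈ Finset.univ.erase k,
                Real.exp (-h * ℓ' i) *
                  Real.cosh (h * ((∑ t ∈ Finset.Icc 1 (i - k).val,
                      L (k + (t : ZMod (2 * n)))) - Λ / 2)) * Y i)
              + Real.exp (-h * ℓ' k) * Real.exp (-h * Λ / 2) * Y k) := by
        rw [mul_add]
        congr 1
        · rw [Finset.mul_sum]
          refine Finset.sum_congr rfl fun i hi => ?_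
          linear_combination (Real.exp (-h * ℓ' i) * Y i)
            * hcoshid (∑ t ∈ Finset.Icc 1 (i - k).val, L (k + (t : ZMod (2 * n))))
        · linear_combination (-2 * (Real.exp (-h * ℓ' k) * Y k)) * hEE
  rw [← final, one_div, inv_mul_cancel_left₀ (ne_of_gt hsinhpos)]
end

section
/- Under Lim's system hypotheses (see context), for every k ∈ ZMod(2n): (1 + exp(−h·ℓ'_k))·(Y_k + Y_{ω(k)}) ≤ (1/tanh(h·Λ/2)) · Σ_{i ∈ ZMod(2n)} exp(−h·ℓ'_i)·(Y_i + Y_{ω(i)}). -/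
open Finset

private lemma sum_range_add' (m q : ℕ) (f : ℕ → ℝ) :
    ∑ t ∈ range (m + q), f t = ∑ t ∈ range m, f t + ∑ t ∈ range q, f (m + t) := by
  induction q with
  | zero => simp
  | succ q ih => rw [← Nat.add_assoc, sum_range_succ, sum_range_succ, ih]; ring

private lemma zmod_sum_range (n : ℕ) [NeZero n] (g : ZMod n → ℝ) :
    ∑ t ∈ range n, g (t : ZMod n) = ∑ i, g i := by
  refine Finset.sum_nbij' (fun t => (t : ZMod n)) (fun i => i.val) ?_ ?_ ?_ ?_ ?_
  · intro a _; exact mem_univ _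
  · intro a _; exact mem_range.2 (ZMod.val_lt a)
  · intro a ha; exact ZMod.val_natCast_of_lt (mem_range.1 ha)
  · intro a _; exact ZMod.natCast_zmod_val a
  · intro a _; rfl

set_option maxHeartbeats 1000000 in
/-- Intermediate inequality in the proof of Theorem 2 (from
`cosh(h(S(k,i) − Λ/2)) ≤ cosh(hΛ/2)`):
`(1 + e^{-hℓ'ₖ})(Yₖ + Y_{ω(k)}) ≤ (1/tanh(hΛ/2)) Σᵢ e^{-hℓ'ᵢ}(Yᵢ + Y_{ω(i)})`. -/
theorem lim_system_tanh_intermediate_inequality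
    (n : ℕ) [NeZero n] (hn : 1 ≤ n) (h : ℝ) (hh : 0 < h)
    (L ℓ' X Xb Y : ZMod (2 * n) → ℝ)
    (ω : ZMod (2 * n) → ZMod (2 * n))
    (hL : ∀ k, 0 < L k)
    (hω : ∀ k, ω (ω k) = k) (hω' : ∀ k, ω k ≠ k)
    (hℓpos : ∀ k, 0 < ℓ' k) (hℓω : ∀ k, ℓ' (ω k) = ℓ' k)
    (hX : ∀ k, 0 < X k) (hXb : ∀ k, 0 < Xb k) (hY : ∀ k, 0 < Y k)
    (eqY : ∀ k, Y k = Real.exp (-h * L (ω k + 1)) * X (ω k + 1)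
        + Real.exp (-h * L (ω k)) * Xb (ω k))
    (eqX : ∀ k, X k = Real.exp (-h * L (k + 1)) * X (k + 1)
        + Real.exp (-h * ℓ' k) * Y k)
    (eqXb : ∀ k, Xb k = Real.exp (-h * L (k - 1)) * Xb (k - 1)
        + Real.exp (-h * ℓ' (k - 1)) * Y (k - 1)) :
    ∀ k : ZMod (2 * n),
      (1 + Real.exp (-h * ℓ' k)) * (Y k + Y (ω k)) ≤
        (1 / Real.tanh (h * (∑ j, L j) / 2)) *
          ∑ i, Real.exp (-h * ℓ' i) * (Y i + Y (ω i)) := by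
  haveI : NeZero (2 * n) := ⟨by positivity⟩
  set Λ : ℝ := ∑ j, L j with hΛdef
  set Q : ℝ := Real.exp (-h * Λ) with hQdef
  set A : ℝ := ∑ i, Real.exp (-h * ℓ' i) * Y i with hAdef
  have hΛpos : 0 < Λ := Finset.sum_pos (fun i _ => hL i) ⟨0, Finset.mem_univ 0⟩
  have hQpos : 0 < Q := Real.exp_pos _
  have hQlt : Q < 1 := by
    rw [hQdef, ← Real.exp_zero]
    exact Real.exp_lt_exp.2 (by nlinarith)
  -- pair bound : e^{-hS} + e^{-hT} ≤ 1 + Q  when S,T ≥ 0, S+T = Λ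
  have hpair : ∀ S T : ℝ, 0 ≤ S → 0 ≤ T → S + T = Λ →
      Real.exp (-h * S) + Real.exp (-h * T) ≤ 1 + Q := by
    intro S T hS hT hST
    have h1 : Real.exp (-h * S) ≤ 1 := by
      rw [← Real.exp_zero]; exact Real.exp_le_exp.2 (by nlinarith)
    have h2 : Real.exp (-h * T) ≤ 1 := by
      rw [← Real.exp_zero]; exact Real.exp_le_exp.2 (by nlinarith)
    have h3 : Real.exp (-h * S) * Real.exp (-h * T) = Q := by
      rw [← Real.exp_add, hQdef]; congr 1; rw [← hST]; ring
    nlinarith [mul_nonneg (by linarith : (0:ℝ) ≤ 1 - Real.exp (-h * S))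
      (by linarith : (0:ℝ) ≤ 1 - Real.exp (-h * T))]
  -- the key per-index inequality
  have star : ∀ k, (1 - Q) * (Y (ω k) + Real.exp (-h * ℓ' k) * Y k) ≤ (1 + Q) * A := by
    intro k
    set F : ℕ → ℝ := fun m => ∑ t ∈ range m, L (k + t + 1) with hF
    set B : ℕ → ℝ := fun m => ∑ t ∈ range m, L (k - t) with hB
    have hF0 : F 0 = 0 := by simp [hF]
    have hB0 : B 0 = 0 := by simp [hB]
    have hFnn : ∀ m, 0 ≤ F m := fun m => Finset.sum_nonneg fun t _ => (hL _).le
    have hBnn : ∀ m, 0 ≤ B m := fun m => Finset.sum_nonneg fun t _ => (hL _).le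
    have hF2n : F (2 * n) = Λ := by
      simp only [hF]
      rw [zmod_sum_range (2 * n) (fun i => L (k + i + 1)), hΛdef]
      exact Fintype.sum_equiv (Equiv.addLeft (k + 1)) _ _
        (fun i => by rw [Equiv.coe_addLeft]; congr 1; ring)
    have hFB : ∀ p q : ℕ, p + q = 2 * n → F p + B q = Λ := by
      intro p q hpq
      have hBq : B q = ∑ t ∈ range q, L (k + ((p + t : ℕ) : ZMod (2 * n)) + 1) := by
        have hrefl0 := Finset.sum_range_reflect
          (fun t => L (k - ((t : ℕ) : ZMod (2 * n)))) q
        simp only [hB]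
        rw [← hrefl0]
        apply Finset.sum_congr rfl
        intro t ht
        have ht' : t < q := mem_range.1 ht
        congr 1
        have hnat : (q - 1 - t) + (p + t + 1) = 2 * n := by omega
        have hc : ((q - 1 - t : ℕ) : ZMod (2 * n)) + ((p + t + 1 : ℕ) : ZMod (2 * n)) = 0 := by
          rw [← Nat.cast_add, hnat, ZMod.natCast_self]
        push_cast at hc ⊢
        linear_combination -hc
      have hsplit := sum_range_add' p q (fun t => L (k + (t : ZMod (2 * n)) + 1))
      have h2 := hF2n
      simp only [hF] at h2 ⊢
      rw [hBq, ← hsplit, hpq]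
      exact h2
    -- forward expansion
    have forward : ∀ m : ℕ, X k = Real.exp (-h * F m) * X (k + m) +
        ∑ j ∈ range m, Real.exp (-h * F j) *
          (Real.exp (-h * ℓ' (k + j)) * Y (k + j)) := by
      intro m
      induction m with
      | zero => simp [hF0]
      | succ m ih =>
        rw [ih, sum_range_succ]
        have hstep : F (m + 1) = F m + L (k + m + 1) := by
          simp only [hF]; exact sum_range_succ _ _
        have hcast : k + ((m + 1 : ℕ) : ZMod (2 * n)) = k + (m : ZMod (2 * n)) + 1 := by
          push_cast; ring
        have hexp : Real.exp (-h * (F m + L (k + (m : ZMod (2 * n)) + 1)))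
            = Real.exp (-h * F m) * Real.exp (-h * L (k + (m : ZMod (2 * n)) + 1)) := by
          rw [← Real.exp_add]; congr 1; ring
        rw [hcast, hstep, hexp, eqX (k + (m : ZMod (2 * n)))]
        ring
    -- backward expansion
    have backward : ∀ m : ℕ, Xb (k + 1) = Real.exp (-h * B m) * Xb (k + 1 - m) +
        ∑ j ∈ range m, Real.exp (-h * B j) *
          (Real.exp (-h * ℓ' (k - j)) * Y (k - j)) := by
      intro m
      induction m with
      | zero => simp [hB0]
      | succ m ih =>
        rw [ih, sum_range_succ]
        have hstep : B (m + 1) = B m + L (k - m) := by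
          simp only [hB]; exact sum_range_succ _ _
        have hcast : k + 1 - ((m + 1 : ℕ) : ZMod (2 * n)) = k - (m : ZMod (2 * n)) := by
          push_cast; ring
        have hexp : Real.exp (-h * (B m + L (k - (m : ZMod (2 * n)))))
            = Real.exp (-h * B m) * Real.exp (-h * L (k - (m : ZMod (2 * n)))) := by
          rw [← Real.exp_add]; congr 1; ring
        have e3 : Xb (k + 1 - (m : ZMod (2 * n))) =
            Real.exp (-h * L (k - (m : ZMod (2 * n)))) * Xb (k - (m : ZMod (2 * n)))
            + Real.exp (-h * ℓ' (k - (m : ZMod (2 * n)))) * Y (k - (m : ZMod (2 * n))) := by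
          have e0 := eqXb (k + 1 - (m : ZMod (2 * n)))
          rw [show k + 1 - (m : ZMod (2 * n)) - 1 = k - (m : ZMod (2 * n)) by ring] at e0
          exact e0
        rw [hcast, hstep, hexp, e3]
        ring
    have hcast2n : ((2 * n : ℕ) : ZMod (2 * n)) = 0 := ZMod.natCast_self _
    have hXkey : (1 - Q) * X k = ∑ j ∈ range (2 * n), Real.exp (-h * F j) *
        (Real.exp (-h * ℓ' (k + j)) * Y (k + j)) := by
      have hf := forward (2 * n)
      rw [hcast2n, add_zero, hF2n, ← hQdef] at hf
      linarith
    have hB2n : B (2 * n) = Λ := by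
      have := hFB 0 (2 * n) (by omega)
      rw [hF0, zero_add] at this; exact this
    have hXbkey : (1 - Q) * Xb (k + 1) = ∑ j ∈ range (2 * n), Real.exp (-h * B j) *
        (Real.exp (-h * ℓ' (k - j)) * Y (k - j)) := by
      have hb := backward (2 * n)
      rw [hcast2n, sub_zero, hB2n, ← hQdef] at hb
      linarith
    obtain ⟨N, hN⟩ : ∃ N, 2 * n = N + 1 := ⟨2 * n - 1, by omega⟩
    rw [show range (2 * n) = range (N + 1) by rw [hN], Finset.sum_range_succ'] at hXkey hXbkey
    simp only [hF0, hB0, mul_zero, neg_zero, Real.exp_zero, one_mul, Nat.cast_zero,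
      add_zero, sub_zero] at hXkey hXbkey
    -- reflect the backward sum
    have hre : ∑ j ∈ range N, Real.exp (-h * B (j + 1)) *
          (Real.exp (-h * ℓ' (k - ((j + 1 : ℕ) : ZMod (2 * n)))) * Y (k - ((j + 1 : ℕ) : ZMod (2 * n))))
        = ∑ j ∈ range N, Real.exp (-h * B (N - j)) *
          (Real.exp (-h * ℓ' (k - ((N - j : ℕ) : ZMod (2 * n)))) * Y (k - ((N - j : ℕ) : ZMod (2 * n)))) := by
      have hrefl := Finset.sum_range_reflect (fun j => Real.exp (-h * B (j + 1)) *
        (Real.exp (-h * ℓ' (k - ((j + 1 : ℕ) : ZMod (2 * n)))) *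
          Y (k - ((j + 1 : ℕ) : ZMod (2 * n))))) N
      rw [← hrefl]
      apply Finset.sum_congr rfl
      intro j hj
      have hj' : j < N := mem_range.1 hj
      have heq : N - 1 - j + 1 = N - j := by omega
      rw [heq]
    rw [hre] at hXbkey
    -- per-term bound
    have hterm : ∀ j ∈ range N,
        Real.exp (-h * F (j + 1)) * (Real.exp (-h * ℓ' (k + ((j + 1 : ℕ) : ZMod (2 * n)))) *
            Y (k + ((j + 1 : ℕ) : ZMod (2 * n))))
        + Real.exp (-h * B (N - j)) * (Real.exp (-h * ℓ' (k - ((N - j : ℕ) : ZMod (2 * n)))) *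
            Y (k - ((N - j : ℕ) : ZMod (2 * n))))
        ≤ (1 + Q) * (Real.exp (-h * ℓ' (k + ((j + 1 : ℕ) : ZMod (2 * n)))) *
            Y (k + ((j + 1 : ℕ) : ZMod (2 * n)))) := by
      intro j hj
      have hj' : j < N := mem_range.1 hj
      have hidx : k - ((N - j : ℕ) : ZMod (2 * n)) = k + ((j + 1 : ℕ) : ZMod (2 * n)) := by
        have hnat : (N - j) + (j + 1) = 2 * n := by omega
        have hc : ((N - j : ℕ) : ZMod (2 * n)) + ((j + 1 : ℕ) : ZMod (2 * n)) = 0 := by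
          rw [← Nat.cast_add, hnat, ZMod.natCast_self]
        have h2 : ((N - j : ℕ) : ZMod (2 * n)) = -((j + 1 : ℕ) : ZMod (2 * n)) :=
          eq_neg_of_add_eq_zero_left hc
        rw [h2]; ring
      rw [hidx]
      have hsum : F (j + 1) + B (N - j) = Λ := hFB (j + 1) (N - j) (by omega)
      have hp := hpair (F (j + 1)) (B (N - j)) (hFnn _) (hBnn _) hsum
      have hP : 0 < Real.exp (-h * ℓ' (k + ((j + 1 : ℕ) : ZMod (2 * n)))) *
          Y (k + ((j + 1 : ℕ) : ZMod (2 * n))) := mul_pos (Real.exp_pos _) (hY _)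
      nlinarith [hp, hP]
    -- the shifted sum of the weights
    have hsumN : ∑ j ∈ range N, Real.exp (-h * ℓ' (k + ((j + 1 : ℕ) : ZMod (2 * n)))) *
          Y (k + ((j + 1 : ℕ) : ZMod (2 * n)))
        = A - Real.exp (-h * ℓ' k) * Y k := by
      have h1 : ∑ j ∈ range (2 * n), Real.exp (-h * ℓ' (k + ((j : ℕ) : ZMod (2 * n)))) *
          Y (k + ((j : ℕ) : ZMod (2 * n))) = A := by
        rw [zmod_sum_range (2 * n) (fun i => Real.exp (-h * ℓ' (k + i)) * Y (k + i)), hAdef]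
        exact Fintype.sum_equiv (Equiv.addLeft k) _ _ (fun i => rfl)
      rw [show range (2 * n) = range (N + 1) by rw [hN], Finset.sum_range_succ'] at h1
      simp only [Nat.cast_zero, add_zero] at h1
      linarith
    -- add up
    have hle : (∑ j ∈ range N, Real.exp (-h * F (j + 1)) *
          (Real.exp (-h * ℓ' (k + ((j + 1 : ℕ) : ZMod (2 * n)))) *
            Y (k + ((j + 1 : ℕ) : ZMod (2 * n)))))
        + (∑ j ∈ range N, Real.exp (-h * B (N - j)) *
          (Real.exp (-h * ℓ' (k - ((N - j : ℕ) : ZMod (2 * n)))) *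
            Y (k - ((N - j : ℕ) : ZMod (2 * n)))))
        ≤ (1 + Q) * (A - Real.exp (-h * ℓ' k) * Y k) := by
      rw [← Finset.sum_add_distrib, ← hsumN, Finset.mul_sum]
      exact Finset.sum_le_sum hterm
    have hXsum : (1 - Q) * (X k + Xb (k + 1)) ≤
        2 * (Real.exp (-h * ℓ' k) * Y k) + (1 + Q) * (A - Real.exp (-h * ℓ' k) * Y k) := by
      have e1 : (1 - Q) * (X k + Xb (k + 1)) = (1 - Q) * X k + (1 - Q) * Xb (k + 1) := by ring
      rw [e1, hXkey, hXbkey]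
      linarith
    have hid : Y (ω k) + 2 * (Real.exp (-h * ℓ' k) * Y k) = X k + Xb (k + 1) := by
      have e1 := eqY (ω k)
      rw [hω k] at e1
      have e2 := eqX k
      have e3 := eqXb (k + 1)
      rw [show k + 1 - 1 = k by ring] at e3
      linarith
    rw [← hid] at hXsum
    nlinarith [hXsum]
  -- tanh identity
  have htanh : Real.tanh (h * Λ / 2) = (1 - Q) / (1 + Q) := by
    rw [Real.tanh_eq_sinh_div_cosh, Real.sinh_eq, Real.cosh_eq]
    have h1 : Real.exp (-(h * Λ / 2)) * Real.exp (h * Λ / 2) = 1 := by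
      rw [← Real.exp_add]; simp
    have h2 : Q = Real.exp (-(h * Λ / 2)) * Real.exp (-(h * Λ / 2)) := by
      rw [hQdef, ← Real.exp_add]; congr 1; ring
    set a := Real.exp (h * Λ / 2) with ha'
    set b := Real.exp (-(h * Λ / 2)) with hb'
    have ha : 0 < a := Real.exp_pos _
    have hb : 0 < b := Real.exp_pos _
    rw [h2]
    rw [div_eq_div_iff (by positivity) (by nlinarith)]
    linear_combination b * h1
  -- symmetrized sum
  have h2A : ∑ i, Real.exp (-h * ℓ' i) * (Y i + Y (ω i)) = 2 * A := by
    have hsplit : ∀ i : ZMod (2 * n), Real.exp (-h * ℓ' i) * (Y i + Y (ω i)) =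
        Real.exp (-h * ℓ' i) * Y i + Real.exp (-h * ℓ' i) * Y (ω i) := fun i => by ring
    rw [Finset.sum_congr rfl (fun i _ => hsplit i), Finset.sum_add_distrib]
    have hωsum : ∑ i, Real.exp (-h * ℓ' i) * Y i = ∑ i, Real.exp (-h * ℓ' i) * Y (ω i) := by
      apply Fintype.sum_bijective ω (Function.Involutive.bijective hω)
      intro x
      rw [hℓω x, hω x]
    rw [← hωsum, ← hAdef]
    ring
  intro k
  have s1 := star k
  have s2 := star (ω k)
  rw [hω k, hℓω k] at s2
  rw [h2A, htanh, one_div_div]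
  rw [div_mul_eq_mul_div, le_div_iff₀ (by linarith : (0:ℝ) < 1 - Q)]
  nlinarith [s1, s2]
end

section
/- Under Lim's system hypotheses (see context), for every k ∈ ZMod(2n): (1 + exp(−h·ℓ'_k))·(Y_k + Y_{ω(k)}) ≥ (1/sinh(h·Λ/2)) · Σ_{i ∈ ZMod(2n)} exp(−h·ℓ'_i)·(Y_i + Y_{ω(i)}). -/
lemma sum_range_shift {N : ℕ} [NeZero N] (f : ZMod N → ℝ) (c : ZMod N) :
    ∑ j ∈ Finset.range N, f (c + (j : ℕ)) = ∑ i, f i := by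
  refine Finset.sum_nbij' (fun j => c + (j : ZMod N)) (fun i => (i - c).val) ?_ ?_ ?_ ?_ ?_
  · intro a _; exact Finset.mem_univ _
  · intro a _; exact Finset.mem_range.mpr (ZMod.val_lt _)
  · intro a ha
    simp only [add_sub_cancel_left]
    exact ZMod.val_natCast_of_lt (Finset.mem_range.mp ha)
  · intro b _
    simp [ZMod.natCast_val, ZMod.cast_id]
  · intro a _; rfl

lemma sum_range_shift_neg {N : ℕ} [NeZero N] (f : ZMod N → ℝ) (c : ZMod N) :
    ∑ j ∈ Finset.range N, f (c - (j : ℕ)) = ∑ i, f i := by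
  have h1 := sum_range_shift (fun x => f (-x)) (-c)
  have h2 : ∑ i : ZMod N, f (-i) = ∑ i, f i :=
    Fintype.sum_equiv (Equiv.neg _) _ _ (fun i => by simp)
  calc ∑ j ∈ Finset.range N, f (c - (j:ℕ)) = ∑ j ∈ Finset.range N, f (-(-c + (j:ℕ))) := by
        apply Finset.sum_congr rfl; intro j _; ring_nf
      _ = ∑ i, f i := by rw [h1, h2]

lemma unrollF {N : ℕ} [NeZero N] (h : ℝ) (L ℓ' X Y : ZMod N → ℝ)
    (eqX : ∀ k, X k = Real.exp (-h * L (k + 1)) * X (k + 1)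
        + Real.exp (-h * ℓ' k) * Y k) (k : ZMod N) :
    ∀ m : ℕ, Real.exp (-h * L (k + 1)) * X (k + 1) =
      Real.exp (-h * ∑ j ∈ Finset.range (m + 1), L (k + 1 + (j : ℕ))) * X (k + 1 + (m : ℕ))
      + ∑ t ∈ Finset.range m,
          Real.exp (-h * (∑ j ∈ Finset.range (t + 1), L (k + 1 + (j : ℕ)) + ℓ' (k + 1 + (t : ℕ))))
            * Y (k + 1 + (t : ℕ)) := by
  have e1 : ∀ a b : ℝ, Real.exp (-h * (a + b)) = Real.exp (-h * a) * Real.exp (-h * b) := by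
    intro a b; rw [← Real.exp_add]; ring_nf
  intro m
  induction m with
  | zero => simp
  | succ m ih =>
    rw [ih, eqX (k + 1 + (m : ℕ))]
    push_cast
    simp only [← add_assoc, Finset.sum_range_succ, e1]
    push_cast [← add_assoc]
    ring

lemma unrollB {N : ℕ} [NeZero N] (h : ℝ) (L ℓ' Xb Y : ZMod N → ℝ)
    (eqXb : ∀ k, Xb k = Real.exp (-h * L (k - 1)) * Xb (k - 1)
        + Real.exp (-h * ℓ' (k - 1)) * Y (k - 1)) (k : ZMod N) :
    ∀ m : ℕ, Real.exp (-h * L k) * Xb k =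
      Real.exp (-h * ∑ j ∈ Finset.range (m + 1), L (k - (j : ℕ))) * Xb (k - (m : ℕ))
      + ∑ t ∈ Finset.range m,
          Real.exp (-h * (∑ j ∈ Finset.range (t + 1), L (k - (j : ℕ)) + ℓ' (k - (t : ℕ) - 1)))
            * Y (k - (t : ℕ) - 1) := by
  have e1 : ∀ a b : ℝ, Real.exp (-h * (a + b)) = Real.exp (-h * a) * Real.exp (-h * b) := by
    intro a b; rw [← Real.exp_add]; ring_nf
  intro m
  induction m with
  | zero => simp
  | succ m ih =>
    rw [ih, eqXb (k - (m : ℕ))]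
    push_cast
    simp only [sub_sub, ← add_assoc, Finset.sum_range_succ, e1]
    push_cast [sub_sub, ← add_assoc]
    ring

lemma amgm_exp (h lam a b : ℝ) (hab : a + b = lam) (w : ℝ) (hw : 0 ≤ w) :
    2 * Real.exp (-(h * lam) / 2) * w ≤ Real.exp (-h * a) * w + Real.exp (-h * b) * w := by
  have h1 : Real.exp (-h * a / 2) * Real.exp (-h * b / 2) = Real.exp (-(h * lam) / 2) := by
    rw [← Real.exp_add]; congr 1; rw [← hab]; ring
  have h2 : Real.exp (-h * a / 2) * Real.exp (-h * a / 2) = Real.exp (-h * a) := by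
    rw [← Real.exp_add]; congr 1; ring
  have h3 : Real.exp (-h * b / 2) * Real.exp (-h * b / 2) = Real.exp (-h * b) := by
    rw [← Real.exp_add]; congr 1; ring
  nlinarith [mul_nonneg (sq_nonneg (Real.exp (-h * a / 2) - Real.exp (-h * b / 2))) hw]

lemma amgm_exp' (h lam a b l y : ℝ) (hab : a + b = lam) (hy : 0 ≤ y) :
    2 * Real.exp (-(h * lam) / 2) * (Real.exp (-h * l) * y) ≤
      Real.exp (-h * (a + l)) * y + Real.exp (-h * (b + l)) * y := by
  have e1 : Real.exp (-h * (a + l)) = Real.exp (-h * a) * Real.exp (-h * l) := by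
    rw [← Real.exp_add]; ring_nf
  have e2 : Real.exp (-h * (b + l)) = Real.exp (-h * b) * Real.exp (-h * l) := by
    rw [← Real.exp_add]; ring_nf
  have h0 : (0:ℝ) ≤ Real.exp (-h * l) * y := by positivity
  calc 2 * Real.exp (-(h * lam) / 2) * (Real.exp (-h * l) * y)
      ≤ Real.exp (-h * a) * (Real.exp (-h * l) * y)
        + Real.exp (-h * b) * (Real.exp (-h * l) * y) := amgm_exp h lam a b hab _ h0
    _ = Real.exp (-h * (a + l)) * y + Real.exp (-h * (b + l)) * y := by rw [e1, e2]; ring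

lemma key_bound {N : ℕ} [NeZero N] (hN2 : 2 ≤ N) (h : ℝ) (L ℓ' X Xb Y : ZMod N → ℝ)
    (ω : ZMod N → ZMod N) (hω : ∀ k, ω (ω k) = k)
    (hY : ∀ k, 0 < Y k)
    (eqY : ∀ k, Y k = Real.exp (-h * L (ω k + 1)) * X (ω k + 1)
        + Real.exp (-h * L (ω k)) * Xb (ω k))
    (eqX : ∀ k, X k = Real.exp (-h * L (k + 1)) * X (k + 1)
        + Real.exp (-h * ℓ' k) * Y k)
    (eqXb : ∀ k, Xb k = Real.exp (-h * L (k - 1)) * Xb (k - 1)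
        + Real.exp (-h * ℓ' (k - 1)) * Y (k - 1))
    (k : ZMod N) :
    2 * Real.exp (-(h * ∑ j, L j) / 2) * (∑ i, Real.exp (-h * ℓ' i) * Y i)
      - (2 * Real.exp (-(h * ∑ j, L j) / 2) - 2 * Real.exp (-(h * ∑ j, L j)))
          * (Real.exp (-h * ℓ' k) * Y k)
    ≤ Y (ω k) * (1 - Real.exp (-(h * ∑ j, L j))) := by
  obtain ⟨M, rfl⟩ : ∃ M, N = M + 1 := ⟨N - 1, by omega⟩
  have hM1 : 1 ≤ M := by omega
  set lam := ∑ j, L j with hlam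
  set E := Real.exp (-(h * lam)) with hE
  set c := Real.exp (-(h * lam) / 2) with hc
  set S := ∑ i, Real.exp (-h * ℓ' i) * Y i with hS
  set D := Real.exp (-h * ℓ' k) * Y k with hD
  -- shifted full-circle sums
  have hshift : ∑ j ∈ Finset.range (M+1), L (k + 1 + (j : ℕ)) = lam := sum_range_shift L (k + 1)
  have hshift2 : ∑ j ∈ Finset.range (M+1), L (k - (j : ℕ)) = lam := sum_range_shift_neg L k
  have hNz : (((M+1 : ℕ)) : ZMod (M+1)) = 0 := ZMod.natCast_self (M+1)
  -- unroll around the circle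
  have hF := unrollF h L ℓ' X Y eqX k (M+1)
  have hB := unrollB h L ℓ' Xb Y eqXb k (M+1)
  rw [Finset.sum_range_succ, hshift, hNz, add_zero] at hF
  rw [Finset.sum_range_succ, hshift2, hNz, sub_zero] at hB
  have esplit1 : Real.exp (-h * (lam + L (k + 1))) = E * Real.exp (-h * L (k + 1)) := by
    rw [hE, ← Real.exp_add]; ring_nf
  have esplit2 : Real.exp (-h * (lam + L k)) = E * Real.exp (-h * L k) := by
    rw [hE, ← Real.exp_add]; ring_nf
  rw [esplit1] at hF
  rw [esplit2] at hB
  have hYid : Y (ω k) * (1 - E) =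
      (∑ t ∈ Finset.range (M + 1),
        Real.exp (-h * (∑ j ∈ Finset.range (t + 1), L (k + 1 + (j : ℕ)) + ℓ' (k + 1 + (t : ℕ))))
          * Y (k + 1 + (t : ℕ)))
      + ∑ t ∈ Finset.range (M + 1),
        Real.exp (-h * (∑ j ∈ Finset.range (t + 1), L (k - (j : ℕ)) + ℓ' (k - (t : ℕ) - 1)))
          * Y (k - (t : ℕ) - 1) := by
    have hY' : Y (ω k) = Real.exp (-h * L (k + 1)) * X (k + 1) + Real.exp (-h * L k) * Xb k := by
      have := eqY (ω k); rwa [hω k] at this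
    rw [hY']; linear_combination hF + hB
  have hM : ((M : ℕ) : ZMod (M + 1)) = -1 := by
    have : ((M : ℕ) : ZMod (M + 1)) + 1 = 0 := by push_cast at hNz; linear_combination hNz
    linear_combination this
  -- reflect the backward sum
  have hBrefl : ∑ t ∈ Finset.range (M + 1),
        Real.exp (-h * (∑ j ∈ Finset.range (t + 1), L (k - (j : ℕ)) + ℓ' (k - (t : ℕ) - 1)))
          * Y (k - (t : ℕ) - 1)
      = ∑ t ∈ Finset.range (M + 1),
        Real.exp (-h * (∑ j ∈ Finset.range ((M - t) + 1), L (k - (j : ℕ)) + ℓ' (k + (t : ℕ))))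
          * Y (k + (t : ℕ)) := by
    rw [← Finset.sum_range_reflect (fun t => Real.exp (-h * (∑ j ∈ Finset.range ((M - t) + 1),
      L (k - (j : ℕ)) + ℓ' (k + (t : ℕ)))) * Y (k + (t : ℕ))) (M + 1)]
    refine Finset.sum_congr rfl ?_
    intro t ht
    have ht' : t ≤ M := by simpa [Nat.lt_succ_iff] using ht
    have h1 : M + 1 - 1 - t = M - t := by omega
    have h2 : M - (M - t) = t := by omega
    have h3 : k + ((M - t : ℕ) : ZMod (M + 1)) = k - (t : ℕ) - 1 := by
      rw [Nat.cast_sub ht', hM]; ring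
    rw [h1, h2, h3]
  rw [hBrefl] at hYid
  -- the complementary-arc identity
  have pairsum : ∀ t, t < M →
      (∑ j ∈ Finset.range (t + 1), L (k + 1 + (j : ℕ)))
        + (∑ j ∈ Finset.range ((M - (t + 1)) + 1), L (k - (j : ℕ))) = lam := by
    intro t ht
    have h1 : (M - (t + 1)) + 1 = M - t := by omega
    have h2 : ∑ j ∈ Finset.range (M - t), L (k - (j : ℕ))
        = ∑ j ∈ Finset.range (M - t), L (k + 1 + ((t + 1 + j : ℕ))) := by
      rw [← Finset.sum_range_reflect]
      refine Finset.sum_congr rfl ?_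
      intro j hj
      have hj' : j < M - t := Finset.mem_range.mp hj
      have e1 : M - t - 1 - j = M - (t + 1 + j) := by omega
      have e2 : k - ((M - (t + 1 + j) : ℕ) : ZMod (M + 1)) = k + 1 + ((t + 1 + j : ℕ)) := by
        rw [Nat.cast_sub (by omega : t + 1 + j ≤ M), hM]
        push_cast
        ring
      rw [e1, e2]
    rw [h1, h2, ← Finset.sum_range_add (fun j => L (k + 1 + (j : ℕ))) (t + 1) (M - t)]
    have : t + 1 + (M - t) = M + 1 := by omega
    rw [this, hshift]
  -- split off the t = M / t = 0 terms
  rw [Finset.sum_range_succ] at hYid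
  rw [Finset.sum_range_succ' (fun t => Real.exp (-h * (∑ j ∈ Finset.range (M - t + 1),
    L (k - (j : ℕ)) + ℓ' (k + (t : ℕ)))) * Y (k + (t : ℕ))) M] at hYid
  have hidxM : k + 1 + ((M : ℕ) : ZMod (M + 1)) = k := by rw [hM]; ring
  simp only [hidxM, Nat.sub_zero, Nat.cast_zero, add_zero, hshift, hshift2] at hYid
  have hED : Real.exp (-h * (lam + ℓ' k)) * Y k = E * D := by
    rw [hE, hD, ← mul_assoc, ← Real.exp_add]; ring_nf
  rw [hED] at hYid
  -- the sum of the shifted weights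
  have hsplitS : ∑ t ∈ Finset.range (M + 1),
      Real.exp (-h * ℓ' (k + 1 + (t : ℕ))) * Y (k + 1 + (t : ℕ)) = S := by
    have := sum_range_shift (fun x => Real.exp (-h * ℓ' x) * Y x) (k + 1)
    rw [hS]; exact this
  rw [Finset.sum_range_succ, hidxM] at hsplitS
  have hgS : ∑ t ∈ Finset.range M,
      Real.exp (-h * ℓ' (k + 1 + (t : ℕ))) * Y (k + 1 + (t : ℕ)) = S - D := by
    rw [hD]; linarith [hsplitS]
  -- termwise AM–GM bound
  have hterm : ∀ t ∈ Finset.range M,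
      2 * c * (Real.exp (-h * ℓ' (k + 1 + (t : ℕ))) * Y (k + 1 + (t : ℕ))) ≤
        Real.exp (-h * (∑ j ∈ Finset.range (t + 1), L (k + 1 + (j : ℕ)) + ℓ' (k + 1 + (t : ℕ))))
            * Y (k + 1 + (t : ℕ))
        + Real.exp (-h * (∑ j ∈ Finset.range ((M - (t + 1)) + 1), L (k - (j : ℕ))
              + ℓ' (k + ((t + 1 : ℕ) : ZMod (M + 1))))) * Y (k + ((t + 1 : ℕ) : ZMod (M + 1))) := by
    intro t ht
    have ht' : t < M := Finset.mem_range.mp ht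
    have e3 : k + ((t + 1 : ℕ) : ZMod (M + 1)) = k + 1 + (t : ℕ) := by push_cast; ring
    rw [e3, hc]
    exact amgm_exp' h lam _ _ _ _ (pairsum t ht') (hY _).le
  calc 2 * c * S - (2 * c - 2 * E) * D
      = (∑ t ∈ Finset.range M,
          2 * c * (Real.exp (-h * ℓ' (k + 1 + (t : ℕ))) * Y (k + 1 + (t : ℕ)))) + (E * D + E * D) := by
        rw [← Finset.mul_sum, hgS]; ring
    _ ≤ (∑ t ∈ Finset.range M,
          (Real.exp (-h * (∑ j ∈ Finset.range (t + 1), L (k + 1 + (j : ℕ)) + ℓ' (k + 1 + (t : ℕ))))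
            * Y (k + 1 + (t : ℕ))
          + Real.exp (-h * (∑ j ∈ Finset.range ((M - (t + 1)) + 1), L (k - (j : ℕ))
              + ℓ' (k + ((t + 1 : ℕ) : ZMod (M + 1))))) * Y (k + ((t + 1 : ℕ) : ZMod (M + 1)))))
          + (E * D + E * D) :=
        add_le_add_left (Finset.sum_le_sum hterm) _
    _ = Y (ω k) * (1 - E) := by rw [hYid, Finset.sum_add_distrib]; ring

/-- Intermediate inequality in the proof of Theorem 2 (from
`cosh(h(S(k,i) − Λ/2)) ≥ 1`):
`(1 + e^{-hℓ'ₖ})(Yₖ + Y_{ω(k)}) ≥ (1/sinh(hΛ/2)) Σᵢ e^{-hℓ'ᵢ}(Yᵢ + Y_{ω(i)})`. -/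
theorem lim_system_sinh_intermediate_inequality
    (n : ℕ) [NeZero n] (hn : 1 ≤ n) (h : ℝ) (hh : 0 < h)
    (L ℓ' X Xb Y : ZMod (2 * n) → ℝ)
    (ω : ZMod (2 * n) → ZMod (2 * n))
    (hL : ∀ k, 0 < L k)
    (hω : ∀ k, ω (ω k) = k) (hω' : ∀ k, ω k ≠ k)
    (hℓpos : ∀ k, 0 < ℓ' k) (hℓω : ∀ k, ℓ' (ω k) = ℓ' k)
    (hX : ∀ k, 0 < X k) (hXb : ∀ k, 0 < Xb k) (hY : ∀ k, 0 < Y k)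
    (eqY : ∀ k, Y k = Real.exp (-h * L (ω k + 1)) * X (ω k + 1)
        + Real.exp (-h * L (ω k)) * Xb (ω k))
    (eqX : ∀ k, X k = Real.exp (-h * L (k + 1)) * X (k + 1)
        + Real.exp (-h * ℓ' k) * Y k)
    (eqXb : ∀ k, Xb k = Real.exp (-h * L (k - 1)) * Xb (k - 1)
        + Real.exp (-h * ℓ' (k - 1)) * Y (k - 1)) :
    ∀ k : ZMod (2 * n),
      (1 + Real.exp (-h * ℓ' k)) * (Y k + Y (ω k)) ≥
        (1 / Real.sinh (h * (∑ j, L j) / 2)) *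
          ∑ i, Real.exp (-h * ℓ' i) * (Y i + Y (ω i)) := by
  haveI : NeZero (2 * n) := ⟨by omega⟩
  intro k
  set lam := ∑ j, L j with hlam
  set S := ∑ i, Real.exp (-h * ℓ' i) * Y i with hS
  set E := Real.exp (-(h * lam)) with hE
  set c := Real.exp (-(h * lam) / 2) with hc
  set q := Real.exp (-h * ℓ' k) with hq
  set s := Real.sinh (h * lam / 2) with hs
  have hlampos : 0 < lam := Finset.sum_pos (fun i _ => hL i) Finset.univ_nonempty
  have hspos : 0 < s := Real.sinh_pos_iff.mpr (by positivity)
  have hcpos : 0 < c := Real.exp_pos _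
  have hqpos : 0 < q := Real.exp_pos _
  have hN2 : 2 ≤ 2 * n := by omega
  have hsum2 : ∑ i, Real.exp (-h * ℓ' i) * (Y i + Y (ω i)) = 2 * S := by
    have h1 : ∑ i, Real.exp (-h * ℓ' i) * Y (ω i) = S := by
      rw [hS]
      refine Fintype.sum_bijective ω (Function.Involutive.bijective hω) _ _ ?_
      intro i; rw [hℓω i]
    rw [hS] at h1 ⊢
    calc ∑ i, Real.exp (-h * ℓ' i) * (Y i + Y (ω i))
        = (∑ i, Real.exp (-h * ℓ' i) * Y i) + ∑ i, Real.exp (-h * ℓ' i) * Y (ω i) := by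
          rw [← Finset.sum_add_distrib]; exact Finset.sum_congr rfl (fun i _ => by ring)
      _ = 2 * ∑ i, Real.exp (-h * ℓ' i) * Y i := by rw [h1]; ring
  have key1 := key_bound hN2 h L ℓ' X Xb Y ω hω hY eqY eqX eqXb k
  have key2 := key_bound hN2 h L ℓ' X Xb Y ω hω hY eqY eqX eqXb (ω k)
  rw [hω k, hℓω k] at key2
  rw [← hlam, ← hS, ← hE, ← hc, ← hq] at key1 key2
  have hcc : c * c = E := by rw [hc, hE, ← Real.exp_add]; ring_nf
  have hsinh : 1 - E = 2 * c * s := by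
    have a1 : c * Real.exp (h * lam / 2) = 1 := by
      rw [hc, ← Real.exp_add, show -(h * lam) / 2 + h * lam / 2 = 0 by ring, Real.exp_zero]
    have a3 : Real.exp (-(h * lam / 2)) = c := by rw [hc]; congr 1; ring
    rw [hs, Real.sinh_eq]
    linear_combination -a1 + c * a3 + hcc
  have hP : 0 < Y k + Y (ω k) := by have := hY k; have := hY (ω k); linarith
  have sum12 : 4 * c * S - (2 * c - 2 * E) * (q * (Y k + Y (ω k))) ≤
      (Y k + Y (ω k)) * (1 - E) := by linarith [key1, key2]
  have fact : (0:ℝ) ≤ (1 - c)^2 * (q * (Y k + Y (ω k))) :=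
    mul_nonneg (sq_nonneg _) (mul_pos hqpos hP).le
  have fact2 : (0:ℝ) ≤ (1 - 2*c + E) * (q * (Y k + Y (ω k))) := by
    calc (0:ℝ) ≤ (1 - c)^2 * (q * (Y k + Y (ω k))) := fact
      _ = (1 - 2*c + c*c) * (q * (Y k + Y (ω k))) := by ring
      _ = (1 - 2*c + E) * (q * (Y k + Y (ω k))) := by rw [hcc]
  have step1 : 4 * c * S ≤ (1 + q) * (Y k + Y (ω k)) * (1 - E) := by
    nlinarith [sum12, fact2]
  rw [hsinh] at step1
  have step2 : 2 * S ≤ (1 + q) * (Y k + Y (ω k)) * s := by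
    have h2c : (0:ℝ) < 2 * c := by linarith
    refine le_of_mul_le_mul_left ?_ h2c
    calc 2 * c * (2 * S) = 4 * c * S := by ring
      _ ≤ (1 + q) * (Y k + Y (ω k)) * (2 * c * s) := step1
      _ = 2 * c * ((1 + q) * (Y k + Y (ω k)) * s) := by ring
  rw [hsum2, ge_iff_le, one_div_mul_eq_div, div_le_iff₀ hspos]
  exact step2
end

section
/- Combinatorial claim of Remark 'notsharp': let N ≥ 1 be an integer and L : ZMod(N) → ℝ with L_j > 0 for all j, and set Λ := Σ_{j ∈ ZMod(N)} L_j. For k, i ∈ ZMod(N) define the cyclic partial sum S(k,i) := Σ_{t=1}^{d} L_{k+t}, where d is the unique integer in {0, 1, …, N−1} with i = k + d in ZMod(N) (so S(k,k) = 0). For each i ∈ ZMod(N) let C(i) be the number of k ∈ ZMod(N) such that S(k,i) < Λ/4 or S(k,i) > 3Λ/4. Then the number of i ∈ ZMod(N) with 4·C(i) ≥ N is at least N/2, i.e. 2·#{ i ∈ ZMod(N) : 4·C(i) ≥ N } ≥ N. -/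
namespace NotSharpAux

open Finset

variable {N : ℕ} [NeZero N] (L : ZMod N → ℝ)

/-- cyclic partial sum from `k` towards `i`. -/
noncomputable def S (k i : ZMod N) : ℝ :=
  ∑ t ∈ Finset.Icc 1 (i - k).val, L (k + (t : ZMod N))

lemma S_self (k : ZMod N) : S L k k = 0 := by
  simp [S]

lemma Icc_one (x : ℕ) : Finset.Icc 1 x = Finset.Ioc 0 x := by
  ext t; simp; omega

lemma sum_shift (i : ZMod N) (a m : ℕ) :
    ∑ t ∈ Finset.Ioc a (a + m), L (i + (t : ZMod N))
      = ∑ s ∈ Finset.Ioc 0 m, L (i + (a : ZMod N) + (s : ZMod N)) := by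
  have h : Finset.Ioc a (a + m) = (Finset.Ioc 0 m).map (addLeftEmbedding a) := by
    rw [Finset.map_add_left_Ioc]; simp
  rw [h, Finset.sum_map]
  refine Finset.sum_congr rfl fun s _ => ?_
  have : ((addLeftEmbedding a) s : ℕ) = a + s := rfl
  rw [this, Nat.cast_add, add_assoc]

lemma key_cast (k i : ZMod N) : k = i + (((k - i).val : ℕ) : ZMod N) := by
  rw [ZMod.natCast_zmod_val]; ring

lemma S_add {i k j : ZMod N} (h : (k - i).val ≤ (j - i).val) :
    S L i j = S L i k + S L k j := by
  have hk : k = i + (((k - i).val : ℕ) : ZMod N) := key_cast k i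
  have hjk : (j - k).val = (j - i).val - (k - i).val := by
    have h1 : j - k = (((j - i).val - (k - i).val : ℕ) : ZMod N) := by
      rw [Nat.cast_sub h, ZMod.natCast_zmod_val, ZMod.natCast_zmod_val]; ring
    rw [h1, ZMod.val_cast_of_lt]
    exact lt_of_le_of_lt (Nat.sub_le _ _) (ZMod.val_lt _)
  simp only [S, hjk, Icc_one]
  rw [← Finset.sum_Ioc_consecutive (fun t : ℕ => L (i + (t : ZMod N))) (Nat.zero_le (k - i).val) h]
  congr 1
  have h2 := sum_shift L i ((k - i).val) ((j - i).val - (k - i).val)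
  rw [show (k - i).val + ((j - i).val - (k - i).val) = (j - i).val from by omega] at h2
  rw [h2]
  refine Finset.sum_congr rfl fun s _ => ?_
  rw [← hk]

lemma S_comp {i k : ZMod N} (h : k ≠ i) : S L i k + S L k i = ∑ j, L j := by
  have hne : k - i ≠ 0 := sub_ne_zero.mpr h
  have ha0 : (k - i).val ≠ 0 := by
    simpa [ZMod.val_eq_zero] using hne
  have haN : (k - i).val < N := ZMod.val_lt _
  have hk : k = i + (((k - i).val : ℕ) : ZMod N) := key_cast k i
  have hik : (i - k).val = N - (k - i).val := by
    have e : i - k = -(k - i) := by ring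
    rw [e, ZMod.neg_val, if_neg hne]
  simp only [S, hik, Icc_one]
  have e2 : ∑ s ∈ Finset.Ioc 0 (N - (k - i).val), L (k + (s : ZMod N))
      = ∑ t ∈ Finset.Ioc ((k - i).val) N, L (i + (t : ZMod N)) := by
    have h2 := sum_shift L i ((k - i).val) (N - (k - i).val)
    rw [show (k - i).val + (N - (k - i).val) = N from by omega] at h2
    have h3 : ∑ s ∈ Finset.Ioc 0 (N - (k - i).val), L (k + (s : ZMod N))
        = ∑ s ∈ Finset.Ioc 0 (N - (k - i).val),
            L (i + (((k - i).val : ℕ) : ZMod N) + (s : ZMod N)) :=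
      Finset.sum_congr rfl fun s _ => by rw [← hk]
    rw [h3, ← h2]
  rw [e2, Finset.sum_Ioc_consecutive (fun t : ℕ => L (i + (t : ZMod N)))
    (Nat.zero_le _) (le_of_lt haN)]
  -- now : ∑ t ∈ Ioc 0 N, L (i + t) = ∑ j, L j
  have hIoc : ∑ t ∈ Finset.Ioc 0 N, L (i + (t : ZMod N))
      = ∑ t ∈ Finset.Ico 0 N, L (i + (t : ZMod N)) := by
    have h1 : insert 0 (Finset.Ioc 0 N) = Finset.Icc 0 N :=
      Finset.Ioc_insert_left (Nat.zero_le N)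
    have h2 : insert N (Finset.Ico 0 N) = Finset.Icc 0 N :=
      Finset.Ico_insert_right (Nat.zero_le N)
    have e1 : L (i + ((0 : ℕ) : ZMod N)) + ∑ t ∈ Finset.Ioc 0 N, L (i + (t : ZMod N))
        = ∑ t ∈ Finset.Icc 0 N, L (i + (t : ZMod N)) := by
      rw [← h1, Finset.sum_insert (by simp)]
    have e2' : L (i + ((N : ℕ) : ZMod N)) + ∑ t ∈ Finset.Ico 0 N, L (i + (t : ZMod N))
        = ∑ t ∈ Finset.Icc 0 N, L (i + (t : ZMod N)) := by
      rw [← h2, Finset.sum_insert (by simp)]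
    have : L (i + ((0 : ℕ) : ZMod N)) = L (i + ((N : ℕ) : ZMod N)) := by
      rw [ZMod.natCast_self]; norm_num
    linarith
  rw [hIoc, ← Finset.range_eq_Ico]
  have hrange : ∑ t ∈ Finset.range N, L (i + (t : ZMod N)) = ∑ x : ZMod N, L (i + x) := by
    refine Finset.sum_nbij' (fun t : ℕ => (t : ZMod N)) (fun x : ZMod N => x.val)
      ?_ ?_ ?_ ?_ ?_
    · intro a _; exact Finset.mem_univ _
    · intro x _; simpa [Finset.mem_range] using ZMod.val_lt x
    · intro a ha; exact ZMod.val_cast_of_lt (Finset.mem_range.mp ha)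
    · intro x _; exact ZMod.natCast_zmod_val x
    · intro a _; rfl
  rw [hrange]
  exact Fintype.sum_equiv (Equiv.addLeft i) _ _ (fun x => rfl)

lemma S_pos (hL : ∀ j, 0 < L j) {i k : ZMod N} (h : k ≠ i) : 0 < S L i k := by
  have hne : (k - i).val ≠ 0 := by
    simpa [ZMod.val_eq_zero] using sub_ne_zero.mpr h
  refine Finset.sum_pos (fun t _ => hL _) ?_
  exact ⟨1, by simp; omega⟩

lemma S_nonneg (hL : ∀ j, 0 < L j) (i k : ZMod N) : 0 ≤ S L i k :=
  Finset.sum_nonneg fun t _ => le_of_lt (hL _)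

lemma S_strict (hL : ∀ j, 0 < L j) {i k k' : ZMod N} (h : (k - i).val < (k' - i).val) :
    S L i k < S L i k' := by
  have hne : k' ≠ k := by
    intro e; rw [e] at h; omega
  rw [S_add L (le_of_lt h)]
  have := S_pos L hL (i := k) (k := k') hne
  linarith

lemma S_inj (hL : ∀ j, 0 < L j) {i k k' : ZMod N} (h : S L i k = S L i k') : k = k' := by
  rcases Nat.lt_trichotomy (k - i).val (k' - i).val with hlt | heq | hgt
  · exact absurd h (ne_of_lt (S_strict L hL hlt))
  · have : k - i = k' - i := by
      rw [← ZMod.natCast_zmod_val (k - i), ← ZMod.natCast_zmod_val (k' - i), heq]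
    exact sub_left_injective this
  · exact absurd h.symm (ne_of_lt (S_strict L hL hgt))

end NotSharpAux

/-- Combinatorial claim of Remark `notsharp`: with cyclic partial sums
`S(k,i) = Σ_{t=1}^{d} L(k+t)` (where `d = (i−k).val ∈ {0,…,N−1}`) and
`C(i) = #{k : S(k,i) < Λ/4 or S(k,i) > 3Λ/4}`, at least half of the
indices `i` satisfy `4·C(i) ≥ N`. -/
theorem remark_notsharp_combinatorial_claim
    (N : ℕ) [NeZero N] (hN : 1 ≤ N)
    (L : ZMod N → ℝ) (hL : ∀ j, 0 < L j) :
    2 * (Finset.univ.filter (fun i : ZMod N =>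
        N ≤ 4 * (Finset.univ.filter (fun k : ZMod N =>
          (∑ t ∈ Finset.Icc 1 (i - k).val, L (k + (t : ZMod N)))
              < (∑ j, L j) / 4 ∨
            3 * (∑ j, L j) / 4
              < ∑ t ∈ Finset.Icc 1 (i - k).val, L (k + (t : ZMod N)))).card)).card
      ≥ N := by
  classical
  open NotSharpAux in
  set Λ : ℝ := ∑ j, L j with hΛdef
  have hΛ : 0 < Λ := Finset.sum_pos (fun j _ => hL j) ⟨0, Finset.mem_univ 0⟩
  set C : ZMod N → ℕ := fun i => (Finset.univ.filter (fun k : ZMod N =>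
      S L k i < Λ / 4 ∨ 3 * Λ / 4 < S L k i)).card with hCdef
  show N ≤ 2 * (Finset.univ.filter (fun i : ZMod N => N ≤ 4 * C i)).card
  -- every i is near itself
  have hself : ∀ i : ZMod N, 1 ≤ C i := by
    intro i
    refine Finset.card_pos.mpr ⟨i, ?_⟩
    simp only [Finset.mem_filter, Finset.mem_univ, true_and]
    left; rw [S_self]; linarith
  by_cases h4 : N ≤ 4
  · have : (Finset.univ.filter (fun i : ZMod N => N ≤ 4 * C i)) = Finset.univ := by
      refine Finset.filter_true_of_mem (fun i _ => ?_)
      have := hself i; omega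
    rw [this, Finset.card_univ, ZMod.card]
    omega
  push_neg at h4
  -- N ≥ 5, pairing argument
  have key : ∀ i : ZMod N, 4 * C i < N → N ≤ 4 * C (i + ((N / 2 : ℕ) : ZMod N)) := by
    intro i hi
    by_contra hj
    push_neg at hj
    set j : ZMod N := i + ((N / 2 : ℕ) : ZMod N) with hjdef
    have hval : (j - i).val = N / 2 := by
      have : j - i = ((N / 2 : ℕ) : ZMod N) := by rw [hjdef]; ring
      rw [this, ZMod.val_cast_of_lt]; omega
    have hij : i ≠ j := by
      intro e
      have : (j - i).val = 0 := by rw [← e, sub_self, ZMod.val_zero]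
      omega
    -- outside set
    set P : Finset (ZMod N) := Finset.univ.filter (fun k =>
      ¬(S L k i < Λ / 4 ∨ 3 * Λ / 4 < S L k i) ∧
      ¬(S L k j < Λ / 4 ∨ 3 * Λ / 4 < S L k j)) with hPdef
    have hPcard : N ≤ C i + C j + P.card := by
      have hsub : (Finset.univ : Finset (ZMod N)) ⊆
          (Finset.univ.filter (fun k : ZMod N => S L k i < Λ / 4 ∨ 3 * Λ / 4 < S L k i)) ∪
          ((Finset.univ.filter (fun k : ZMod N => S L k j < Λ / 4 ∨ 3 * Λ / 4 < S L k j)) ∪ P) := by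
        intro k _
        by_cases h1 : S L k i < Λ / 4 ∨ 3 * Λ / 4 < S L k i
        · simp [Finset.mem_union, Finset.mem_filter, h1]
        by_cases h2 : S L k j < Λ / 4 ∨ 3 * Λ / 4 < S L k j
        · simp [Finset.mem_union, Finset.mem_filter, h2]
        · refine Finset.mem_union_right _ (Finset.mem_union_right _ ?_)
          rw [hPdef, Finset.mem_filter]
          exact ⟨Finset.mem_univ _, h1, h2⟩
      calc N = (Finset.univ : Finset (ZMod N)).card := by rw [Finset.card_univ, ZMod.card]
        _ ≤ _ := Finset.card_le_card hsub
        _ ≤ C i + (C j + P.card) := le_trans (Finset.card_union_le _ _)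
            (by gcongr; exact Finset.card_union_le _ _)
        _ = C i + C j + P.card := by ring
    have hP4 : 2 * N + 2 ≤ 4 * P.card := by omega
    -- basic facts about members of P
    have hPi : ∀ k ∈ P, k ≠ i ∧ k ≠ j ∧ Λ / 4 ≤ S L k i ∧ S L k i ≤ 3 * Λ / 4 ∧
        Λ / 4 ≤ S L k j ∧ S L k j ≤ 3 * Λ / 4 := by
      intro k hk
      rw [hPdef, Finset.mem_filter] at hk
      obtain ⟨-, h1, h2⟩ := hk
      push_neg at h1 h2
      have hki : k ≠ i := by
        intro e; rw [e, S_self] at h1; linarith [h1.1]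
      have hkj : k ≠ j := by
        intro e; rw [e, S_self] at h2; linarith [h2.1]
      exact ⟨hki, hkj, h1.1, h1.2, h2.1, h2.2⟩
    -- complements
    have hcomp : ∀ {a b : ZMod N}, b ≠ a → Λ / 4 ≤ S L b a → S L b a ≤ 3 * Λ / 4 →
        Λ / 4 ≤ S L a b ∧ S L a b ≤ 3 * Λ / 4 := by
      intro a b hba h1 h2
      have := S_comp L (i := a) (k := b) hba
      constructor <;> linarith
    -- forward members force S i j ≥ Λ/2 ; backward members force S j i ≥ Λ/2
    have hfwd : ∀ k ∈ P, (k - i).val ≤ (j - i).val →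
        Λ / 2 ≤ S L i j ∧ S L i k ≥ Λ / 4 ∧ S L k j ≥ Λ / 4 ∧ S L i j = S L i k + S L k j := by
      intro k hk hkle
      obtain ⟨hki, hkj, h1, h2, h3, h4⟩ := hPi k hk
      have hik := hcomp hki h1 h2
      have hSadd := S_add L (i := i) (k := k) (j := j) hkle
      exact ⟨by linarith [hik.1], hik.1, h3, hSadd⟩
    have hbwd : ∀ k ∈ P, (j - i).val < (k - i).val →
        Λ / 2 ≤ S L j i ∧ S L j k ≥ Λ / 4 ∧ S L k i ≥ Λ / 4 ∧ S L j i = S L j k + S L k i := by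
      intro k hk hklt
      obtain ⟨hki, hkj, h1, h2, h3, h4⟩ := hPi k hk
      have hjk := hcomp hkj h3 h4
      -- additivity along j → k → i : need (k - j).val ≤ (i - j).val
      have hvkj : (k - j).val = (k - i).val - (j - i).val := by
        have h1' : k - j = (((k - i).val - (j - i).val : ℕ) : ZMod N) := by
          rw [Nat.cast_sub (le_of_lt hklt), ZMod.natCast_zmod_val, ZMod.natCast_zmod_val]; ring
        rw [h1', ZMod.val_cast_of_lt]
        exact lt_of_le_of_lt (Nat.sub_le _ _) (ZMod.val_lt _)
      have hvij : (i - j).val = N - (j - i).val := by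
        have e : i - j = -(j - i) := by ring
        have hne : j - i ≠ 0 := by
          intro e'
          have : (j - i).val = 0 := by rw [e', ZMod.val_zero]
          omega
        rw [e, ZMod.neg_val, if_neg hne]
      have hle : (k - j).val ≤ (i - j).val := by
        rw [hvkj, hvij]
        have := ZMod.val_lt (k - i)
        omega
      have hSadd := S_add L (i := j) (k := k) (j := i) hle
      exact ⟨by linarith [hjk.1], hjk.1, h1, hSadd⟩
    -- the three cases
    have hcompij := S_comp L (i := i) (k := j) (Ne.symm hij)
    rcases lt_trichotomy (S L i j) (Λ / 2) with hlt | heq | hgt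
    · -- all of P is backward : P ⊆ image of Ioo (N/2) N
      have hsub : P ⊆ (Finset.Ioo (N / 2) N).image (fun v : ℕ => i + (v : ZMod N)) := by
        intro k hk
        obtain ⟨hki, hkj, -⟩ := hPi k hk
        have hgtv : (j - i).val < (k - i).val := by
          by_contra hle
          push_neg at hle
          have := (hfwd k hk hle).1
          linarith
        refine Finset.mem_image.mpr ⟨(k - i).val, ?_, (key_cast k i).symm⟩
        rw [Finset.mem_Ioo, hval] at *
        exact ⟨by omega, ZMod.val_lt _⟩
      have := le_trans (Finset.card_le_card hsub) (Finset.card_image_le)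
      rw [Nat.card_Ioo] at this
      omega
    · -- S i j = Λ/2 : at most one forward and one backward element
      have hSji : S L j i = Λ / 2 := by linarith
      have hcard : P.card ≤ 2 := by
        have hsplit : P.card = (P.filter (fun k => (k - i).val ≤ (j - i).val)).card +
            (P.filter (fun k => ¬((k - i).val ≤ (j - i).val))).card :=
          (Finset.card_filter_add_card_filter_not _).symm
        have h1 : (P.filter (fun k => (k - i).val ≤ (j - i).val)).card ≤ 1 := by
          refine Finset.card_le_one.mpr (fun a ha b hb => ?_)
          rw [Finset.mem_filter] at ha hb
          have ea := hfwd a ha.1 ha.2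
          have eb := hfwd b hb.1 hb.2
          have : S L i a = Λ / 4 := by
            rcases ea with ⟨-, e1, e2, e3⟩; rw [heq] at e3; linarith
          have hb' : S L i b = Λ / 4 := by
            rcases eb with ⟨-, e1, e2, e3⟩; rw [heq] at e3; linarith
          exact S_inj L hL (by rw [this, hb'])
        have h2 : (P.filter (fun k => ¬((k - i).val ≤ (j - i).val))).card ≤ 1 := by
          refine Finset.card_le_one.mpr (fun a ha b hb => ?_)
          rw [Finset.mem_filter] at ha hb
          have ea := hbwd a ha.1 (by omega)
          have eb := hbwd b hb.1 (by omega)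
          have : S L j a = Λ / 4 := by
            rcases ea with ⟨-, e1, e2, e3⟩; rw [hSji] at e3; linarith
          have hb' : S L j b = Λ / 4 := by
            rcases eb with ⟨-, e1, e2, e3⟩; rw [hSji] at e3; linarith
          exact S_inj L hL (by rw [this, hb'])
        omega
      omega
    · -- all of P is forward : P ⊆ image of Ioo 0 (N/2)
      have hsub : P ⊆ (Finset.Ioo 0 (N / 2)).image (fun v : ℕ => i + (v : ZMod N)) := by
        intro k hk
        obtain ⟨hki, hkj, -⟩ := hPi k hk
        have hlev : (k - i).val ≤ (j - i).val := by
          by_contra hgt'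
          push_neg at hgt'
          have := (hbwd k hk hgt').1
          linarith
        have hne0 : (k - i).val ≠ 0 := by
          intro e
          apply hki
          have := key_cast k i
          rw [e] at this; simpa using this
        have hnej : (k - i).val ≠ (j - i).val := by
          intro e
          apply hkj
          rw [key_cast k i, e, ← key_cast j i]
        refine Finset.mem_image.mpr ⟨(k - i).val, ?_, (key_cast k i).symm⟩
        rw [Finset.mem_Ioo]
        rw [hval] at hlev hnej
        omega
      have := le_trans (Finset.card_le_card hsub) (Finset.card_image_le)
      rw [Nat.card_Ioo] at this
      omega
  -- counting: injection from bad set into good set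
  set G : Finset (ZMod N) := Finset.univ.filter (fun i : ZMod N => N ≤ 4 * C i) with hGdef
  set B : Finset (ZMod N) := Finset.univ.filter (fun i : ZMod N => ¬(N ≤ 4 * C i)) with hBdef
  have hGB : G.card + B.card = N := by
    rw [hGdef, hBdef, Finset.card_filter_add_card_filter_not, Finset.card_univ, ZMod.card]
  have hinj : B.card ≤ G.card := by
    refine Finset.card_le_card_of_injOn (fun i => i + ((N / 2 : ℕ) : ZMod N)) ?_ ?_
    · intro i hi
      rw [hBdef, Finset.mem_coe, Finset.mem_filter] at hi
      rw [hGdef, Finset.mem_coe, Finset.mem_filter]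
      exact ⟨Finset.mem_univ _, key i (by omega)⟩
    · intro a _ b _ h
      exact add_right_cancel h
  omega
end
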